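/- arXiv:math-ph/0204001 — 4 statements merged into one kernel-verified Lean document; each statement's English description precedes it below -/
import Mathlib

section
/- Let Z be a finite set of distinct points in ℂ and let w : Z → Mat(2,ℂ) be such that w(x)² = 0 (w(x) is nilpotent) for every x ∈ Z. If m solves the discrete Riemann–Hilbert problem (Z,w), then the function ζ ↦ det m(ζ) extends from ℂ∖Z to a function analytic on all of ℂ. If, in addition, det m(ζ) → 1 as ζ → ∞, then this entire extension is identically equal to 1. -/
open Filter Topology Matrix Polynomial

noncomputable section

/-- 2×2 complex matrices. -/
abbrev Mat2 : Type := Matrix (Fin 2) (Fin 2) ℂ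

/-- Entrywise complex differentiability (= analyticity) of a matrix-valued function on a set. -/
def EntryDiffOn (m : ℂ → Mat2) (U : Set ℂ) : Prop :=
  ∀ i j, DifferentiableOn ℂ (fun ζ => m ζ i j) U

/-- `m` solves the discrete Riemann–Hilbert problem `(Z, w)`: `m` is analytic off `Z`, has at
most a simple pole at each `x ∈ Z` (i.e. `ζ ↦ (ζ - x) • m ζ` extends analytically to a
neighbourhood of `x`), and the value at `x` of this extension (the residue of `m` at `x`)
equals the limit of `m(ζ) * w(x)` as `ζ → x`. -/
def SolvesDRHP (Z : Finset ℂ) (w : ℂ → Mat2) (m : ℂ → Mat2) : Prop :=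
  EntryDiffOn m ((Z : Set ℂ))ᶜ ∧
  ∀ x ∈ Z, ∃ g : ℂ → Mat2,
    EntryDiffOn g (((Z : Set ℂ))ᶜ ∪ {x}) ∧
    (∀ ζ, ζ ∉ (Z : Set ℂ) → g ζ = (ζ - x) • m ζ) ∧
    Filter.Tendsto (fun ζ => m ζ * w x) (𝓝[≠] x) (𝓝 (g x))

/-- The asymptotic condition `m(ζ) · diag(ζ^{-k}, ζ^k) → I` as `ζ → ∞`. -/
def AsympId (k : ℕ) (m : ℂ → Mat2) : Prop :=
  Filter.Tendsto (fun ζ : ℂ => m ζ * Matrix.diagonal ![ζ⁻¹ ^ k, ζ ^ k])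
    (Bornology.cobounded ℂ) (𝓝 1)

/-- A nilpotent 2×2 matrix has zero trace and zero determinant. -/
lemma nilpotent_trace_det (W : Mat2) (h : W * W = 0) :
    W 0 0 + W 1 1 = 0 ∧ W 0 0 * W 1 1 - W 0 1 * W 1 0 = 0 := by
  have e : ∀ i j : Fin 2, W i 0 * W 0 j + W i 1 * W 1 j = 0 := by
    intro i j
    have := congrFun (congrFun h i) j
    simpa [Matrix.mul_apply, Fin.sum_univ_two] using this
  have e00 := e 0 0
  have e01 := e 0 1
  have e10 := e 1 0
  have e11 := e 1 1
  have htr : W 0 0 + W 1 1 = 0 := by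
    by_cases hs : W 0 0 + W 1 1 = 0
    · exact hs
    · exfalso
      have h01 : W 0 1 = 0 := by
        have : W 0 1 * (W 0 0 + W 1 1) = 0 := by linear_combination e01
        rcases mul_eq_zero.mp this with h | h
        · exact h
        · exact absurd h hs
      have h10 : W 1 0 = 0 := by
        have : W 1 0 * (W 0 0 + W 1 1) = 0 := by linear_combination e10
        rcases mul_eq_zero.mp this with h | h
        · exact h
        · exact absurd h hs
      have h00 : W 0 0 = 0 := by
        have : W 0 0 * W 0 0 = 0 := by linear_combination e00 - W 0 1 * h10
        exact mul_self_eq_zero.mp this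
      have h11 : W 1 1 = 0 := by
        have : W 1 1 * W 1 1 = 0 := by linear_combination e11 - W 1 0 * h01
        exact mul_self_eq_zero.mp this
      exact hs (by rw [h00, h11]; ring)
  refine ⟨htr, ?_⟩
  linear_combination (W 0 0) * htr - e00

/-- Key local fact: at each point of `Z`, `det m` has a (finite) limit. -/
lemma det_limit_at (Z : Finset ℂ) (w m : ℂ → Mat2)
    (hw : ∀ x ∈ Z, w x * w x = 0)
    (hm : SolvesDRHP Z w m) (x : ℂ) (hx : x ∈ Z) :
    ∃ L : ℂ, Filter.Tendsto (fun ζ => (m ζ).det) (𝓝[≠] x) (𝓝 L) := by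
  obtain ⟨hmd, hres⟩ := hm
  obtain ⟨g, hg, hgeq, hglim⟩ := hres x hx
  obtain ⟨htr, hdet⟩ := nilpotent_trace_det (w x) (hw x hx)
  set U : Set ℂ := ((Z : Set ℂ))ᶜ ∪ {x} with hU
  have hUopen : IsOpen U := by
    have : U = (((Z : Set ℂ)) \ {x})ᶜ := by
      ext ζ; simp [hU]; tauto
    rw [this]
    exact (((Z.finite_toSet).subset Set.diff_subset).isClosed).isOpen_compl
  have hxU : x ∈ U := Or.inr rfl
  have hUmem : U ∈ 𝓝 x := hUopen.mem_nhds hxU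
  have hZc : ((Z : Set ℂ))ᶜ ∈ 𝓝[≠] x := by
    have h1 : U ∈ 𝓝[≠] x := mem_nhdsWithin_of_mem_nhds hUmem
    have h2 : {x}ᶜ ∈ 𝓝[≠] x := self_mem_nhdsWithin
    filter_upwards [h1, h2] with ζ hζU hζx
    rcases hζU with h | h
    · exact h
    · exact absurd h hζx
  -- entrywise limit of m * w x
  have hglim' : ∀ i j : Fin 2, Filter.Tendsto (fun ζ => (m ζ * w x) i j) (𝓝[≠] x)
      (𝓝 (g x i j)) := by
    intro i j
    exact (((continuous_apply j).comp (continuous_apply i)).continuousAt).tendsto.comp hglim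
  -- P = g * w x
  set P : ℂ → Mat2 := fun ζ => g ζ * w x with hPdef
  have hP : ∀ i j : Fin 2, DifferentiableOn ℂ (fun ζ => P ζ i j) U := by
    intro i j
    have : (fun ζ => P ζ i j) = fun ζ => g ζ i 0 * w x 0 j + g ζ i 1 * w x 1 j := by
      funext ζ; simp [hPdef, Matrix.mul_apply, Fin.sum_univ_two]
    rw [this]
    exact ((hg i 0).mul_const _).add ((hg i 1).mul_const _)
  have hPx : ∀ i j : Fin 2, P x i j = 0 := by
    intro i j
    have hcont : Filter.Tendsto (fun ζ => P ζ i j) (𝓝[≠] x) (𝓝 (P x i j)) :=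
      (((hP i j).differentiableAt hUmem).continuousAt.tendsto).mono_left nhdsWithin_le_nhds
    have hzero : Filter.Tendsto (fun ζ => P ζ i j) (𝓝[≠] x) (𝓝 0) := by
      have heq : ∀ᶠ ζ in 𝓝[≠] x, (ζ - x) * ((m ζ * w x) i j) = P ζ i j := by
        filter_upwards [hZc] with ζ hζ
        simp [hPdef, hgeq ζ hζ, Matrix.mul_apply, Fin.sum_univ_two, Matrix.smul_apply]
        ring
      have : Filter.Tendsto (fun ζ : ℂ => (ζ - x) * ((m ζ * w x) i j)) (𝓝[≠] x)
          (𝓝 (0 * g x i j)) := by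
        refine Filter.Tendsto.mul ?_ (hglim' i j)
        have : Filter.Tendsto (fun ζ : ℂ => ζ - x) (𝓝 x) (𝓝 (x - x)) :=
          (continuous_id.sub continuous_const).continuousAt.tendsto
        simpa using this.mono_left nhdsWithin_le_nhds
      rw [zero_mul] at this
      exact this.congr' heq
    exact tendsto_nhds_unique hcont hzero
  -- q = dslope of P entries
  set q : Fin 2 → Fin 2 → ℂ → ℂ := fun i j => dslope (fun ζ => P ζ i j) x with hqdef
  have hq_diff : ∀ i j, DifferentiableOn ℂ (q i j) U := fun i j =>
    (Complex.differentiableOn_dslope hUmem).mpr (hP i j)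
  have hq_eq : ∀ i j, ∀ ζ ∉ (Z : Set ℂ), q i j ζ = (m ζ * w x) i j := by
    intro i j ζ hζ
    have hζx : ζ ≠ x := fun h => hζ (h ▸ hx)
    simp only [hqdef]
    rw [dslope_of_ne _ hζx, slope_def_field]
    rw [hPx i j]
    have : P ζ i j = (ζ - x) * ((m ζ * w x) i j) := by
      simp [hPdef, hgeq ζ hζ, Matrix.mul_apply, Fin.sum_univ_two, Matrix.smul_apply]
      ring
    rw [this]
    field_simp [sub_ne_zero.mpr hζx]
    ring
  have hq_x : ∀ i j, q i j x = g x i j := by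
    intro i j
    have hcont : Filter.Tendsto (q i j) (𝓝[≠] x) (𝓝 (q i j x)) :=
      ((continuousAt_dslope_same.mpr ((hP i j).differentiableAt hUmem)).tendsto).mono_left
        nhdsWithin_le_nhds
    have : Filter.Tendsto (q i j) (𝓝[≠] x) (𝓝 (g x i j)) := by
      refine (hglim' i j).congr' ?_
      filter_upwards [hZc] with ζ hζ
      exact (hq_eq i j ζ hζ).symm
    exact tendsto_nhds_unique hcont this
  -- ψ i j = g entry minus q
  set ψ : Fin 2 → Fin 2 → ℂ → ℂ := fun i j ζ => g ζ i j - q i j ζ with hψdef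
  have hψ_diff : ∀ i j, DifferentiableOn ℂ (ψ i j) U := fun i j => (hg i j).sub (hq_diff i j)
  have hψ_x : ∀ i j, ψ i j x = 0 := by
    intro i j; simp [hψdef, hq_x i j]
  -- χ i j = dslope of ψ
  set χ : Fin 2 → Fin 2 → ℂ → ℂ := fun i j => dslope (ψ i j) x with hχdef
  have hχ_cont : ∀ i j, Filter.Tendsto (χ i j) (𝓝[≠] x) (𝓝 (χ i j x)) := fun i j =>
    ((continuousAt_dslope_same.mpr ((hψ_diff i j).differentiableAt hUmem)).tendsto).mono_left
      nhdsWithin_le_nhds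
  have hχ_eq : ∀ i j, ∀ ζ ∉ (Z : Set ℂ),
      χ i j ζ = m ζ i j - (ζ - x)⁻¹ * ((m ζ * w x) i j) := by
    intro i j ζ hζ
    have hζx : ζ ≠ x := fun h => hζ (h ▸ hx)
    have hne : ζ - x ≠ 0 := sub_ne_zero.mpr hζx
    simp only [hχdef]
    rw [dslope_of_ne _ hζx, slope_def_field, hψ_x i j]
    have hgz : g ζ i j = (ζ - x) * m ζ i j := by
      simp [hgeq ζ hζ, Matrix.smul_apply]
    simp only [hψdef, hgz, hq_eq i j ζ hζ]
    field_simp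
    ring
  refine ⟨χ 0 0 x * χ 1 1 x - χ 0 1 x * χ 1 0 x, ?_⟩
  have hlim : Filter.Tendsto (fun ζ => χ 0 0 ζ * χ 1 1 ζ - χ 0 1 ζ * χ 1 0 ζ) (𝓝[≠] x)
      (𝓝 (χ 0 0 x * χ 1 1 x - χ 0 1 x * χ 1 0 x)) :=
    ((hχ_cont 0 0).mul (hχ_cont 1 1)).sub ((hχ_cont 0 1).mul (hχ_cont 1 0))
  refine hlim.congr' ?_
  filter_upwards [hZc] with ζ hζ
  have hζx : ζ ≠ x := fun h => hζ (h ▸ hx)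
  have hne : ζ - x ≠ 0 := sub_ne_zero.mpr hζx
  rw [hχ_eq 0 0 ζ hζ, hχ_eq 1 1 ζ hζ, hχ_eq 0 1 ζ hζ, hχ_eq 1 0 ζ hζ]
  rw [Matrix.det_fin_two]
  simp only [Matrix.mul_apply, Fin.sum_univ_two]
  set c : ℂ := (ζ - x)⁻¹ with hc
  set a00 := m ζ 0 0; set a01 := m ζ 0 1; set a10 := m ζ 1 0; set a11 := m ζ 1 1
  set W00 := w x 0 0; set W01 := w x 0 1; set W10 := w x 1 0; set W11 := w x 1 1
  linear_combination (-(c) * (a00*a11 - a01*a10)) * htr + (c^2 * (a00*a11 - a01*a10)) * hdet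

/-- if every jump matrix is nilpotent, `det m` extends to an entire function,
and if moreover `det m(ζ) → 1` at infinity, any such entire extension is identically `1`. -/
theorem stmt0 (Z : Finset ℂ) (w m : ℂ → Mat2)
    (hw : ∀ x ∈ Z, w x * w x = 0)
    (hm : SolvesDRHP Z w m) :
    (∃ h : ℂ → ℂ, Differentiable ℂ h ∧ ∀ ζ ∉ (Z : Set ℂ), h ζ = (m ζ).det) ∧
    (∀ h : ℂ → ℂ, Differentiable ℂ h → (∀ ζ ∉ (Z : Set ℂ), h ζ = (m ζ).det) →
      Filter.Tendsto (fun ζ => (m ζ).det) (Bornology.cobounded ℂ) (𝓝 1) →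
      ∀ ζ, h ζ = 1) := by
  have hZclosed : IsClosed ((Z : Set ℂ)) := Z.finite_toSet.isClosed
  have hZcopen : IsOpen (((Z : Set ℂ))ᶜ) := hZclosed.isOpen_compl
  set F : ℂ → ℂ := fun ζ => (m ζ).det with hFdef
  have hFdiff : DifferentiableOn ℂ F (((Z : Set ℂ))ᶜ) := by
    have : F = fun ζ => m ζ 0 0 * m ζ 1 1 - m ζ 0 1 * m ζ 1 0 := by
      funext ζ; rw [hFdef]; exact Matrix.det_fin_two _
    rw [this]
    exact ((hm.1 0 0).mul (hm.1 1 1)).sub ((hm.1 0 1).mul (hm.1 1 0))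
  classical
  set h : ℂ → ℂ := fun ζ => if ζ ∈ (Z : Set ℂ) then limUnder (𝓝[≠] ζ) F else F ζ with hhdef
  have hagree : ∀ ζ ∉ (Z : Set ℂ), h ζ = F ζ := by
    intro ζ hζ; simp only [hhdef]; exact if_neg hζ
  have hdiff_off : ∀ ζ ∉ (Z : Set ℂ), DifferentiableAt ℂ h ζ := by
    intro ζ hζ
    have hF : DifferentiableAt ℂ F ζ := hFdiff.differentiableAt (hZcopen.mem_nhds hζ)
    refine hF.congr_of_eventuallyEq ?_
    filter_upwards [hZcopen.mem_nhds hζ] with z hz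
    exact hagree z hz
  have hdiff : Differentiable ℂ h := by
    intro ζ
    by_cases hζ : ζ ∈ (Z : Set ℂ)
    · obtain ⟨L, hL⟩ := det_limit_at Z w m hw hm ζ hζ
      have hZc : ((Z : Set ℂ))ᶜ ∈ 𝓝[≠] ζ := by
        have hUopen : IsOpen ((((Z : Set ℂ)) \ {ζ})ᶜ) :=
          (((Z.finite_toSet).subset Set.diff_subset).isClosed).isOpen_compl
        have hUmem : (((Z : Set ℂ)) \ {ζ})ᶜ ∈ 𝓝 ζ := hUopen.mem_nhds (by simp)
        have h1 : ((((Z : Set ℂ)) \ {ζ}))ᶜ ∈ 𝓝[≠] ζ := mem_nhdsWithin_of_mem_nhds hUmem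
        filter_upwards [h1, self_mem_nhdsWithin] with z hz1 hz2
        intro hzZ
        exact hz1 ⟨hzZ, hz2⟩
      have heqF : h =ᶠ[𝓝[≠] ζ] F := by
        filter_upwards [hZc] with z hz using hagree z hz
      have hhζ : h ζ = L := by
        simp only [hhdef, if_pos hζ]
        exact hL.limUnder_eq
      have hcontAt : ContinuousAt h ζ := by
        rw [ContinuousAt, ← nhdsNE_sup_pure ζ]
        rw [Filter.tendsto_sup]
        constructor
        · rw [hhζ]; exact hL.congr' heqF.symm
        · exact tendsto_pure_nhds h ζ
      have hev : ∀ᶠ z in 𝓝[≠] ζ, DifferentiableAt ℂ h z := by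
        filter_upwards [hZc] with z hz using hdiff_off z hz
      exact (Complex.analyticAt_of_differentiable_on_punctured_nhds_of_continuousAt
        hev hcontAt).differentiableAt
    · exact hdiff_off ζ hζ
  refine ⟨⟨h, hdiff, hagree⟩, ?_⟩
  intro h' hdiff' hagree' hT
  have hZc_cob : ((Z : Set ℂ))ᶜ ∈ Bornology.cobounded ℂ :=
    Bornology.isBounded_def.mp Z.finite_toSet.isBounded
  have hT' : Filter.Tendsto h' (Bornology.cobounded ℂ) (𝓝 1) := by
    refine hT.congr' ?_
    filter_upwards [hZc_cob] with z hz
    exact (hagree' z hz).symm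
  rw [Metric.cobounded_eq_cocompact] at hT'
  intro ζ
  exact hdiff'.apply_eq_of_tendsto_cocompact ζ hT'
end
end

section
/- Let X = {x_0,…,x_N} ⊂ ℂ be a finite set of N+1 distinct points, let ω : X → ℂ be a nondegenerate weight, let {P_n}_{n=0}^N be the associated monic orthogonal polynomials, and set w(x) = [[0, ω(x)],[0,0]] for x ∈ X. Then for every integer k with 1 ≤ k ≤ N, the discrete Riemann–Hilbert problem (X,w) has exactly one solution m satisfying m(ζ)·diag(ζ^{−k}, ζ^{k}) → I as ζ → ∞; moreover, the (1,1) entry of m is the polynomial P_k and the (2,1) entry of m is (P_{k−1},P_{k−1})_ω^{−1}·P_{k−1}. -/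
open Filter Topology Matrix Polynomial

noncomputable section

/-- The bilinear form `(f,g)_ω = Σ_{x=0}^{N} f(π x) g(π x) ω x` on complex polynomials,
for a weight `ω` on the `N+1` points `π 0, …, π N`. -/
def ipC (N : ℕ) (π ω : ℕ → ℂ) (f g : Polynomial ℂ) : ℂ :=
  ∑ x ∈ Finset.range (N + 1), f.eval (π x) * g.eval (π x) * ω x

/-- The weight `ω` on the `N+1` points `π 0, …, π N` is nondegenerate: for every `d ≤ N`,
the form `(·,·)_ω` is nondegenerate on polynomials of degree at most `d`. -/
def Nondeg (N : ℕ) (π ω : ℕ → ℂ) : Prop :=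
  ∀ d ≤ N, ∀ f : Polynomial ℂ, f.degree ≤ (d : ℕ) →
    (∀ g : Polynomial ℂ, g.degree ≤ (d : ℕ) → ipC N π ω f g = 0) → f = 0

open Bornology
namespace DRHP
open Bornology



lemma ev_notin (S : Finset ℂ) : ∀ᶠ ζ : ℂ in cobounded ℂ, ζ ∉ (S : Set ℂ) := by
  have : IsBounded (S : Set ℂ) := S.finite_toSet.isBounded
  exact this

lemma ev_ne_zero : ∀ᶠ ζ : ℂ in cobounded ℂ, ζ ≠ 0 := by
  have h : IsBounded ({0} : Set ℂ) := isBounded_singleton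
  have h2 : ({0} : Set ℂ)ᶜ ∈ cobounded ℂ := h
  filter_upwards [h2] with ζ hζ
  simpa using hζ

lemma tendsto_sub_cobounded (a : ℂ) :
    Tendsto (fun ζ : ℂ => ζ - a) (cobounded ℂ) (cobounded ℂ) := by
  rw [← tendsto_norm_atTop_iff_cobounded]
  have h1 : Tendsto (fun ζ : ℂ => ‖ζ‖ - ‖a‖) (cobounded ℂ) atTop :=
    (tendsto_norm_cobounded_atTop.atTop_add tendsto_const_nhds)
  exact tendsto_atTop_mono (fun ζ => by
    have := norm_sub_norm_le ζ a; linarith) h1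

lemma tendsto_const_div (c a : ℂ) :
    Tendsto (fun ζ : ℂ => c / (ζ - a)) (cobounded ℂ) (𝓝 0) := by
  have h := (tendsto_inv₀_cobounded.comp (tendsto_sub_cobounded a)).const_mul c
  simpa [div_eq_mul_inv, Function.comp] using h

lemma tendsto_inv_pow (n : ℕ) (hn : 1 ≤ n) :
    Tendsto (fun ζ : ℂ => ζ⁻¹ ^ n) (cobounded ℂ) (𝓝 0) := by
  have := tendsto_inv₀_cobounded (α := ℂ)
  have h := this.pow n
  simpa [zero_pow (by omega : n ≠ 0)] using h

/-- polynomial times `ζ⁻¹^k` tends to `coeff k`. -/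
lemma tendsto_poly_inv_pow (q : Polynomial ℂ) (k : ℕ) (h : q.natDegree ≤ k) :
    Tendsto (fun ζ : ℂ => q.eval ζ * ζ⁻¹ ^ k) (cobounded ℂ) (𝓝 (q.coeff k)) := by
  have hrange : ∀ ζ : ℂ, q.eval ζ = ∑ i ∈ Finset.range (k + 1), q.coeff i * ζ ^ i :=
    fun ζ => eval_eq_sum_range' (by omega) ζ
  have key : Tendsto (fun ζ : ℂ => ∑ i ∈ Finset.range (k + 1), q.coeff i * ζ ^ i * ζ⁻¹ ^ k)
      (cobounded ℂ) (𝓝 (∑ i ∈ Finset.range (k + 1), if i = k then q.coeff k else 0)) := by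
    apply tendsto_finset_sum
    intro i hi
    rcases eq_or_ne i k with rfl | hik
    · simp only [if_pos rfl]
      have : ∀ᶠ ζ : ℂ in cobounded ℂ, q.coeff i * ζ ^ i * ζ⁻¹ ^ i = q.coeff i := by
        filter_upwards [ev_ne_zero] with ζ hζ
        have h2 : ζ ^ i * ζ⁻¹ ^ i = 1 := by rw [← mul_pow, mul_inv_cancel₀ hζ, one_pow]
        linear_combination (q.coeff i) * h2
      exact Tendsto.congr' (by filter_upwards [this] with ζ h using h.symm) tendsto_const_nhds
    · have hik' : i < k := by
        simp only [Finset.mem_range] at hi; omega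
      simp only [if_neg hik]
      have : ∀ᶠ ζ : ℂ in cobounded ℂ, q.coeff i * ζ ^ i * ζ⁻¹ ^ k
          = q.coeff i * ζ⁻¹ ^ (k - i) := by
        filter_upwards [ev_ne_zero] with ζ hζ
        have : ζ⁻¹ ^ k = ζ⁻¹ ^ i * ζ⁻¹ ^ (k - i) := by
          rw [← pow_add]; congr 1; omega
        rw [this]
        have h2 : ζ ^ i * ζ⁻¹ ^ i = 1 := by rw [← mul_pow, mul_inv_cancel₀ hζ, one_pow]
        linear_combination (q.coeff i * ζ⁻¹ ^ (k - i)) * h2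
      refine Tendsto.congr' (by filter_upwards [this] with ζ h using h.symm) ?_
      have := (tendsto_inv_pow (k - i) (by omega)).const_mul (q.coeff i)
      simpa using this
  have : (∑ i ∈ Finset.range (k + 1), if i = k then q.coeff k else 0) = q.coeff k := by
    simp
  rw [this] at key
  exact key.congr' (by filter_upwards with ζ; rw [hrange ζ, Finset.sum_mul])

/-- Entire + tendsto at cobounded ⇒ constant. -/
lemma entire_eq_const {f : ℂ → ℂ} (hf : Differentiable ℂ f) {c : ℂ}
    (h : Tendsto f (cobounded ℂ) (𝓝 c)) : ∀ z, f z = c := by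
  have := hf.eq_const_of_tendsto_cocompact (Metric.cobounded_eq_cocompact (α := ℂ) ▸ h)
  intro z; rw [this]; rfl

/-- Entire with polynomial growth is a polynomial. -/
lemma entire_poly_growth : ∀ (k : ℕ) (f : ℂ → ℂ), Differentiable ℂ f → ∀ (c : ℂ),
    Tendsto (fun ζ => f ζ * ζ⁻¹ ^ k) (cobounded ℂ) (𝓝 c) →
    ∃ q : Polynomial ℂ, q.natDegree ≤ k ∧ q.coeff k = c ∧ ∀ ζ, f ζ = q.eval ζ := by
  intro k
  induction k with
  | zero =>
    intro f hf c h
    refine ⟨Polynomial.C c, by simp, by simp, ?_⟩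
    have := entire_eq_const hf (c := c) (by simpa using h)
    simpa using this
  | succ k ih =>
    intro f hf c h
    set g := dslope f 0 with hg
    have hgd : Differentiable ℂ g := by
      rw [← differentiableOn_univ]
      exact (Complex.differentiableOn_dslope (univ_mem)).mpr hf.differentiableOn
    have hgt : Tendsto (fun ζ => g ζ * ζ⁻¹ ^ k) (cobounded ℂ) (𝓝 c) := by
      have he : ∀ᶠ ζ : ℂ in cobounded ℂ,
          g ζ * ζ⁻¹ ^ k = f ζ * ζ⁻¹ ^ (k + 1) - f 0 * ζ⁻¹ ^ (k + 1) := by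
        filter_upwards [ev_ne_zero] with ζ hζ
        rw [hg, dslope_of_ne _ hζ, slope_def_field, sub_zero, div_eq_mul_inv, pow_succ]
        ring
      refine Tendsto.congr' (by filter_upwards [he] with ζ h using h.symm) ?_
      have h2 := (tendsto_inv_pow (k + 1) (by omega)).const_mul (f 0)
      simpa using h.sub h2
    obtain ⟨q', hq1, hq2, hq3⟩ := ih g hgd c hgt
    refine ⟨Polynomial.C (f 0) + Polynomial.X * q', ?_, ?_, ?_⟩
    · refine (Polynomial.natDegree_add_le _ _).trans (max_le (by simp) ?_)
      refine (Polynomial.natDegree_mul_le).trans ?_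
      simp only [natDegree_X]
      omega
    · rw [Polynomial.coeff_add, Polynomial.coeff_C,
        if_neg (by omega : k + 1 ≠ 0), Polynomial.coeff_X_mul]
      simpa using hq2
    · intro ζ
      rcases eq_or_ne ζ 0 with rfl | hζ
      · simp
      · have hgy := hq3 ζ
        rw [hg, dslope_of_ne _ hζ, slope_def_field] at hgy
        simp only [eval_add, eval_C, eval_mul, eval_X, ← hgy]
        field_simp
        ring
  



variable (N : ℕ) (π ω : ℕ → ℂ)

/-- Discrete Cauchy transform of a polynomial against the weight. -/
def cau (q : Polynomial ℂ) (ζ : ℂ) : ℂ :=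
  ∑ x ∈ Finset.range (N + 1), q.eval (π x) * ω x / (ζ - π x)

lemma ipC_add_right (f g h : Polynomial ℂ) :
    ipC N π ω f (g + h) = ipC N π ω f g + ipC N π ω f h := by
  simp [ipC, mul_add, add_mul, Finset.sum_add_distrib]

lemma ipC_sub_left (f f' g : Polynomial ℂ) :
    ipC N π ω (f - f') g = ipC N π ω f g - ipC N π ω f' g := by
  simp [ipC, sub_mul, Finset.sum_sub_distrib]

lemma ipC_C_mul_left (c : ℂ) (f g : Polynomial ℂ) :
    ipC N π ω (Polynomial.C c * f) g = c * ipC N π ω f g := by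
  simp [ipC, Finset.mul_sum]; apply Finset.sum_congr rfl; intros; ring

lemma ipC_C_mul_right (c : ℂ) (f g : Polynomial ℂ) :
    ipC N π ω f (Polynomial.C c * g) = c * ipC N π ω f g := by
  simp [ipC, Finset.mul_sum]; apply Finset.sum_congr rfl; intros; ring

lemma ipC_zero_right (f : Polynomial ℂ) : ipC N π ω f 0 = 0 := by simp [ipC]

lemma ipC_monomial_expand (f g : Polynomial ℂ) (d : ℕ) (hg : g.natDegree ≤ d) :
    ipC N π ω f g = ∑ i ∈ Finset.range (d + 1),
      g.coeff i * ipC N π ω f (Polynomial.X ^ i) := by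
  have key : ∀ x ∈ Finset.range (N + 1), f.eval (π x) * g.eval (π x) * ω x
      = ∑ i ∈ Finset.range (d + 1),
        g.coeff i * (f.eval (π x) * ((Polynomial.X : Polynomial ℂ) ^ i).eval (π x) * ω x) := by
    intro x _
    rw [eval_eq_sum_range' (Nat.lt_succ_of_le hg) (π x)]
    simp only [eval_pow, eval_X, Finset.mul_sum, Finset.sum_mul]
    apply Finset.sum_congr rfl
    intro i _
    ring
  rw [ipC, Finset.sum_congr rfl key, Finset.sum_comm]
  apply Finset.sum_congr rfl
  intro i _
  rw [ipC, Finset.mul_sum]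

/-- Key algebraic expansion of `ζ^k * cau q ζ`. -/
lemma cau_expand (q : Polynomial ℂ) (k : ℕ) (ζ : ℂ)
    (hζ : ∀ j ∈ Finset.range (N + 1), ζ ≠ π j) :
    cau N π ω q ζ * ζ ^ k
      = (∑ j ∈ Finset.range k, ipC N π ω q (Polynomial.X ^ (k - 1 - j)) * ζ ^ j)
        + cau N π ω (q * Polynomial.X ^ k) ζ := by
  have key : ∀ x ∈ Finset.range (N + 1),
      q.eval (π x) * ω x / (ζ - π x) * ζ ^ k
        = (∑ j ∈ Finset.range k, (q.eval (π x) * (π x) ^ (k - 1 - j) * ω x) * ζ ^ j)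
          + (q * Polynomial.X ^ k).eval (π x) * ω x / (ζ - π x) := by
    intro x hx
    have hd : ζ - π x ≠ 0 := sub_ne_zero.mpr (hζ x hx)
    have hgs := geom_sum₂_mul ζ (π x) k
    simp only [eval_mul, eval_pow, eval_X]
    have hsum : (∑ j ∈ Finset.range k, eval (π x) q * π x ^ (k - 1 - j) * ω x * ζ ^ j)
        = (eval (π x) q * ω x) * ∑ j ∈ Finset.range k, ζ ^ j * π x ^ (k - 1 - j) := by
      rw [Finset.mul_sum]; exact Finset.sum_congr rfl (fun j _ => by ring)
    rw [div_mul_eq_mul_div, div_eq_iff hd, add_mul, div_mul_cancel₀ _ hd, hsum]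
    linear_combination (-(eval (π x) q * ω x)) * hgs
  rw [cau, Finset.sum_mul, Finset.sum_congr rfl key, Finset.sum_add_distrib]
  congr 1
  rw [Finset.sum_comm]
  apply Finset.sum_congr rfl
  intro j _
  rw [ipC, Finset.sum_mul]
  apply Finset.sum_congr rfl
  intro x _
  simp only [eval_pow, eval_X]
  try ring

lemma cau_diffOn (q : Polynomial ℂ) (X : Finset ℂ)
    (hXin : ∀ j ∈ Finset.range (N + 1), π j ∈ X) :
    DifferentiableOn ℂ (cau N π ω q) ((X : Set ℂ))ᶜ := by
  apply DifferentiableOn.fun_sum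
  intro j hj
  apply DifferentiableOn.div (differentiableOn_const _)
    ((differentiableOn_id.sub (differentiableOn_const _)))
  intro ζ hζ
  rw [sub_ne_zero]
  exact fun h => hζ (h ▸ Finset.mem_coe.mpr (hXin j hj))

lemma cau_tendsto_zero (q : Polynomial ℂ) :
    Tendsto (cau N π ω q) (cobounded ℂ) (𝓝 0) := by
  have : Tendsto (fun ζ => ∑ x ∈ Finset.range (N + 1), q.eval (π x) * ω x / (ζ - π x))
      (cobounded ℂ) (𝓝 (∑ x ∈ Finset.range (N + 1), (0 : ℂ))) := by
    apply tendsto_finset_sum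
    intro x _
    exact DRHP.tendsto_const_div _ _
  rw [Finset.sum_const_zero] at this; exact this

variable (P : ℕ → Polynomial ℂ)

lemma ortho_low
    (hPm : ∀ n ≤ N, (P n).Monic ∧ (P n).natDegree = n)
    (hPo : ∀ m ≤ N, ∀ n ≤ N, m ≠ n → ipC N π ω (P m) (P n) = 0) :
    ∀ n ≤ N, ∀ g : Polynomial ℂ, g.degree < (n : ℕ) → ipC N π ω (P n) g = 0 := by
  intro n hn
  suffices H : ∀ d, ∀ g : Polynomial ℂ, g.natDegree ≤ d → g.degree < (n : ℕ) →
      ipC N π ω (P n) g = 0 by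
    intro g hg; exact H g.natDegree g le_rfl hg
  intro d
  induction d using Nat.strong_induction_on with
  | _ d ih =>
    intro g hgd hgn
    rcases eq_or_ne g 0 with rfl | hg0
    · simp [ipC]
    have he : g.natDegree < n := (Polynomial.natDegree_lt_iff_degree_lt hg0).mpr hgn
    have heN : g.natDegree ≤ N := le_trans (le_of_lt he) hn
    obtain ⟨hPe_mon, hPe_deg⟩ := hPm g.natDegree heN
    set e := g.natDegree with hedef
    set c := g.coeff e with hcdef
    have hc0 : c ≠ 0 := by
      rw [hcdef, hedef]; exact Polynomial.leadingCoeff_ne_zero.mpr hg0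
    set g' := g - Polynomial.C c * P e with hg'
    have hsplit : ipC N π ω (P n) g = ipC N π ω (P n) g' + c * ipC N π ω (P n) (P e) := by
      rw [← ipC_C_mul_right, ← ipC_add_right, hg', sub_add_cancel]
    have hPne : ipC N π ω (P n) (P e) = 0 := hPo n hn e heN (by omega)
    have hdegCP : (Polynomial.C c * P e).degree = g.degree := by
      rw [Polynomial.degree_C_mul hc0, Polynomial.degree_eq_natDegree hPe_mon.ne_zero,
        Polynomial.degree_eq_natDegree hg0, hPe_deg]
    have hdeg : g'.degree < g.degree := by
      apply Polynomial.degree_sub_lt hdegCP.symm hg0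
      rw [Polynomial.leadingCoeff_mul, Polynomial.leadingCoeff_C, hPe_mon.leadingCoeff, mul_one]
      rfl
    rcases eq_or_ne g' 0 with h0 | hg'0
    · rw [hsplit, h0, ipC_zero_right, hPne]; ring
    · have hnatlt : g'.natDegree < e :=
        (Polynomial.natDegree_lt_iff_degree_lt hg'0).mpr
          (lt_of_lt_of_le hdeg (Polynomial.degree_le_natDegree))
      have := ih g'.natDegree (lt_of_lt_of_le hnatlt hgd) g' le_rfl
        (lt_trans hdeg hgn)
      rw [hsplit, this, hPne]; ring

lemma ipC_Pn_Xpow_lt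
    (hPm : ∀ n ≤ N, (P n).Monic ∧ (P n).natDegree = n)
    (hPo : ∀ m ≤ N, ∀ n ≤ N, m ≠ n → ipC N π ω (P m) (P n) = 0) :
    ∀ n ≤ N, ∀ i < n, ipC N π ω (P n) (Polynomial.X ^ i) = 0 := by
  intro n hn i hi
  apply ortho_low N π ω P hPm hPo n hn
  rw [Polynomial.degree_X_pow]
  exact_mod_cast hi

lemma ipC_Pn_Xpow_self
    (hPm : ∀ n ≤ N, (P n).Monic ∧ (P n).natDegree = n)
    (hPo : ∀ m ≤ N, ∀ n ≤ N, m ≠ n → ipC N π ω (P m) (P n) = 0) :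
    ∀ n ≤ N, ipC N π ω (P n) (Polynomial.X ^ n) = ipC N π ω (P n) (P n) := by
  intro n hn
  obtain ⟨hmon, hdeg⟩ := hPm n hn
  have hsplit : (Polynomial.X ^ n : Polynomial ℂ) = (Polynomial.X ^ n - P n) + P n := by ring
  have hd : (Polynomial.X ^ n - P n : Polynomial ℂ).degree < (n : ℕ) := by
    have := Polynomial.degree_sub_lt (p := (Polynomial.X ^ n : Polynomial ℂ)) (q := P n)
      (by rw [Polynomial.degree_X_pow, Polynomial.degree_eq_natDegree hmon.ne_zero, hdeg])
      (pow_ne_zero _ Polynomial.X_ne_zero)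
      (by rw [Polynomial.leadingCoeff_X_pow, hmon.leadingCoeff])
    rwa [Polynomial.degree_X_pow] at this
  rw [hsplit, ipC_add_right, ortho_low N π ω P hPm hPo n hn _ hd, zero_add]

lemma self_ne_zero (hnd : Nondeg N π ω)
    (hPm : ∀ n ≤ N, (P n).Monic ∧ (P n).natDegree = n)
    (hPo : ∀ m ≤ N, ∀ n ≤ N, m ≠ n → ipC N π ω (P m) (P n) = 0) :
    ∀ n ≤ N, ipC N π ω (P n) (P n) ≠ 0 := by
  intro n hn h0
  obtain ⟨hmon, hdeg⟩ := hPm n hn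
  apply hmon.ne_zero
  apply hnd n hn (P n) (by rw [Polynomial.degree_eq_natDegree hmon.ne_zero, hdeg])
  intro g hg
  have hgnat : g.natDegree ≤ n := Polynomial.natDegree_le_iff_degree_le.mpr hg
  rw [ipC_monomial_expand N π ω (P n) g n hgnat]
  apply Finset.sum_eq_zero
  intro i hi
  rcases lt_or_eq_of_le (Nat.lt_succ_iff.mp (Finset.mem_range.mp hi)) with h | h
  · rw [ipC_Pn_Xpow_lt N π ω P hPm hPo n hn i h, mul_zero]
  · rw [h, ipC_Pn_Xpow_self N π ω P hPm hPo n hn, h0, mul_zero]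

lemma omega_ne_zero (hπ : ∀ i ≤ N, ∀ j ≤ N, π i = π j → i = j) (hnd : Nondeg N π ω) :
    ∀ i ≤ N, ω i ≠ 0 := by
  intro i hi h0
  set f := ∏ j ∈ (Finset.range (N + 1)).erase i, (Polynomial.X - Polynomial.C (π j)) with hf
  have hfi : f.eval (π i) ≠ 0 := by
    rw [hf, Polynomial.eval_prod]
    apply Finset.prod_ne_zero_iff.mpr
    intro j hj
    have hji : j ≠ i := Finset.ne_of_mem_erase hj
    have hjN : j ≤ N := Nat.lt_succ_iff.mp (Finset.mem_range.mp (Finset.mem_of_mem_erase hj))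
    simp only [Polynomial.eval_sub, Polynomial.eval_X, Polynomial.eval_C, sub_ne_zero]
    exact fun h => hji (hπ j hjN i hi h.symm)
  have hfdeg : f.degree ≤ (N : ℕ) := by
    refine le_trans Polynomial.degree_le_natDegree ?_
    have : f.natDegree ≤ ∑ j ∈ (Finset.range (N + 1)).erase i,
        (Polynomial.X - Polynomial.C (π j)).natDegree := Polynomial.natDegree_prod_le _ _
    refine le_trans (Nat.cast_le.mpr this) ?_
    have hcard : ((Finset.range (N + 1)).erase i).card = N := by
      rw [Finset.card_erase_of_mem (Finset.mem_range.mpr (Nat.lt_succ_of_le hi))]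
      simp
    calc ((∑ j ∈ (Finset.range (N + 1)).erase i,
        (Polynomial.X - Polynomial.C (π j)).natDegree : ℕ) : WithBot ℕ)
        = ((∑ j ∈ (Finset.range (N + 1)).erase i, 1 : ℕ) : WithBot ℕ) := by
          norm_cast
          exact Finset.sum_congr rfl (fun j _ => Polynomial.natDegree_X_sub_C _)
      _ ≤ (N : ℕ) := by rw [Finset.sum_const, smul_eq_mul, mul_one, hcard]
  have hvanish : ∀ g : Polynomial ℂ, g.degree ≤ (N : ℕ) → ipC N π ω f g = 0 := by
    intro g _
    rw [ipC]
    apply Finset.sum_eq_zero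
    intro x hx
    rcases eq_or_ne x i with rfl | hxi
    · rw [h0, mul_zero]
    · have : f.eval (π x) = 0 := by
        rw [hf, Polynomial.eval_prod]
        exact Finset.prod_eq_zero (Finset.mem_erase.mpr ⟨hxi, hx⟩) (by simp)
      rw [this, zero_mul, zero_mul]
  exact hfi (by rw [hnd N le_rfl f hfdeg hvanish]; simp)

lemma degree_le_pred (p : Polynomial ℂ) (k : ℕ) (h1 : p.natDegree ≤ k) (h2 : p.coeff k = 0) :
    p.degree ≤ ((k - 1 : ℕ) : WithBot ℕ) := by
  rw [Polynomial.degree_le_iff_coeff_zero]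
  intro m hm
  have hm' : k - 1 < m := by exact_mod_cast hm
  rcases eq_or_ne m k with rfl | hmk
  · exact h2
  · exact Polynomial.coeff_eq_zero_of_natDegree_lt (by omega)


lemma tendsto_mat2 {α : Type*} {l : Filter α} {f : α → Matrix (Fin 2) (Fin 2) ℂ}
    {M : Matrix (Fin 2) (Fin 2) ℂ} (h : ∀ i j, Tendsto (fun a => f a i j) l (𝓝 (M i j))) :
    Tendsto f l (𝓝 M) := by
  exact tendsto_pi_nhds.mpr fun i => tendsto_pi_nhds.mpr fun j => h i j

lemma tendsto_entry {α : Type*} {l : Filter α} {f : α → Matrix (Fin 2) (Fin 2) ℂ}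
    {M : Matrix (Fin 2) (Fin 2) ℂ} (h : Tendsto f l (𝓝 M)) (i j : Fin 2) :
    Tendsto (fun a => f a i j) l (𝓝 (M i j)) := by
  have h1 := tendsto_pi_nhds.mp h i
  exact tendsto_pi_nhds.mp h1 j

/-- Eventually along a punctured neighbourhood we avoid a finite set. -/
lemma ev_nhdsNe_notmem (S : Finset ℂ) (x : ℂ) : ∀ᶠ ζ in 𝓝[≠] x, ζ ∉ (S : Set ℂ) := by
  have ho : IsOpen (((S.erase x : Finset ℂ) : Set ℂ))ᶜ :=
    (Set.Finite.isClosed (S.erase x).finite_toSet).isOpen_compl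
  have hx : x ∈ (((S.erase x : Finset ℂ) : Set ℂ))ᶜ := by
    simp
  have h1 : ∀ᶠ ζ in 𝓝 x, ζ ∈ (((S.erase x : Finset ℂ) : Set ℂ))ᶜ := ho.mem_nhds hx
  filter_upwards [eventually_nhdsWithin_of_eventually_nhds h1, self_mem_nhdsWithin]
    with ζ h hne hS
  apply h
  simp only [Finset.coe_erase, Set.mem_diff, Set.mem_singleton_iff]
  exact ⟨hS, hne⟩

/-- Coefficients of a polynomial-type function tending to a constant at infinity. -/
lemma poly_tendsto_coeffs (a : ℕ → ℂ) (k : ℕ) (L : ℂ)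
    (h : Tendsto (fun ζ : ℂ => ∑ j ∈ Finset.range k, a j * ζ ^ j) (cobounded ℂ) (𝓝 L)) :
    ∀ j < k, a j = if j = 0 then L else 0 := by
  set p := ∑ j ∈ Finset.range k, Polynomial.C (a j) * Polynomial.X ^ j with hp
  have hev : ∀ ζ : ℂ, p.eval ζ = ∑ j ∈ Finset.range k, a j * ζ ^ j := by
    intro ζ; rw [hp]; simp [Polynomial.eval_finset_sum]
  have hd : Differentiable ℂ fun ζ => p.eval ζ := p.differentiable
  have hconst : ∀ ζ : ℂ, p.eval ζ = L :=
    entire_eq_const hd (by rw [show (fun ζ : ℂ => p.eval ζ) = _ from funext hev]; exact h)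
  have hpC : p = Polynomial.C L := Polynomial.funext (fun r => by rw [hconst r, Polynomial.eval_C])
  intro j hj
  have hcoeff : p.coeff j = a j := by
    rw [hp, Polynomial.finset_sum_coeff]
    rw [Finset.sum_eq_single j]
    · simp
    · intro i _ hij
      simp [Polynomial.coeff_C_mul, Polynomial.coeff_X_pow, Ne.symm hij]
    · intro hjk; exact absurd (Finset.mem_range.mpr hj) hjk
  rw [← hcoeff, hpC, Polynomial.coeff_C]

/-- Glue an analytic function off a finite set with removable singularities to an entire one. -/
lemma glue (S : Finset ℂ) (f : ℂ → ℂ)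
    (hf : DifferentiableOn ℂ f ((S : Set ℂ))ᶜ)
    (hlim : ∀ x ∈ S, ∃ L, Tendsto f (𝓝[≠] x) (𝓝 L)) :
    ∃ F : ℂ → ℂ, Differentiable ℂ F ∧ ∀ ζ ∉ (S : Set ℂ), F ζ = f ζ := by
  classical
  set F : ℂ → ℂ := fun ζ => if ζ ∈ S then limUnder (𝓝[≠] ζ) f else f ζ with hF
  have hFeq : ∀ ζ ∉ (S : Set ℂ), F ζ = f ζ := by
    intro ζ hζ; simp only [Finset.mem_coe] at hζ; simp only [hF, if_neg hζ]
  refine ⟨F, ?_, hFeq⟩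
  intro z
  by_cases hz : z ∈ S
  · -- removable singularity
    obtain ⟨L, hL⟩ := hlim z hz
    -- separation radius
    have ho : IsOpen (((S.erase z : Finset ℂ) : Set ℂ))ᶜ :=
      (Set.Finite.isClosed (S.erase z).finite_toSet).isOpen_compl
    obtain ⟨r1, hr1, hball1⟩ := Metric.isOpen_iff.mp ho z (by simp)
    -- boundedness radius
    have hev : ∀ᶠ ζ in 𝓝[≠] z, f ζ ∈ Metric.closedBall L 1 :=
      hL.eventually (Metric.closedBall_mem_nhds L one_pos)
    rw [eventually_nhdsWithin_iff, Metric.eventually_nhds_iff] at hev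
    obtain ⟨r2, hr2, hball2⟩ := hev
    set r := min r1 r2 with hr
    have hrpos : 0 < r := lt_min hr1 hr2
    have hsep : ∀ ζ ∈ Metric.ball z r, ζ ∈ (S : Set ℂ) → ζ = z := by
      intro ζ hζ hζS
      by_contra hne
      have : ζ ∈ (((S.erase z : Finset ℂ) : Set ℂ))ᶜ :=
        hball1 (Metric.ball_subset_ball (min_le_left _ _) hζ)
      exact this (by simp only [Finset.coe_erase, Set.mem_diff, Set.mem_singleton_iff]; exact ⟨hζS, hne⟩)
    have hd : DifferentiableOn ℂ f (Metric.ball z r \ {z}) := by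
      apply hf.mono
      rintro ζ ⟨hζb, hζz⟩ hζS
      exact hζz (Set.mem_singleton_iff.mpr (hsep ζ hζb hζS))
    have hb : BddAbove (norm ∘ f '' (Metric.ball z r \ {z})) := by
      refine ⟨‖L‖ + 1, ?_⟩
      rintro y ⟨ζ, ⟨hζb, hζz⟩, rfl⟩
      have hdist : dist ζ z < r2 := lt_of_lt_of_le (Metric.mem_ball.mp hζb) (min_le_right _ _)
      have := hball2 hdist (by simpa using hζz)
      have hmem := Metric.mem_closedBall.mp this
      simp only [Function.comp]
      have h1 : ‖f ζ - L‖ ≤ 1 := by rw [← dist_eq_norm]; exact hmem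
      calc ‖f ζ‖ = ‖(f ζ - L) + L‖ := by ring_nf
        _ ≤ ‖f ζ - L‖ + ‖L‖ := norm_add_le _ _
        _ ≤ ‖L‖ + 1 := by linarith
    have H := Complex.differentiableOn_update_limUnder_of_bddAbove
      (Metric.ball_mem_nhds z hrpos) hd hb
    have hcongr : Set.EqOn F (Function.update f z (limUnder (𝓝[≠] z) f)) (Metric.ball z r) := by
      intro ζ hζ
      by_cases hζS : ζ ∈ S
      · have : ζ = z := hsep ζ hζ hζS
        subst this
        rw [hF]; simp only [if_pos hζS, Function.update_self]
      · have hζz : ζ ≠ z := fun h => hζS (h ▸ hz)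
        rw [hF]; simp only [if_neg hζS, Function.update_of_ne hζz]
    exact (H.congr hcongr).differentiableAt (Metric.ball_mem_nhds z hrpos)
  · have hopen : IsOpen ((S : Set ℂ))ᶜ := (Set.Finite.isClosed S.finite_toSet).isOpen_compl
    have : DifferentiableOn ℂ F ((S : Set ℂ))ᶜ :=
      hf.congr (fun ζ hζ => hFeq ζ hζ)
    exact this.differentiableAt (hopen.mem_nhds hz)


lemma cau_C_mul (c : ℂ) (q : Polynomial ℂ) (ζ : ℂ) :
    cau N π ω (Polynomial.C c * q) ζ = c * cau N π ω q ζ := by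
  rw [cau, cau, Finset.mul_sum]
  apply Finset.sum_congr rfl
  intro x _
  rw [Polynomial.eval_mul, Polynomial.eval_C]
  ring

lemma tendsto_sum_pow (a : ℕ → ℂ) (k : ℕ) (hk : 1 ≤ k) (h : ∀ j, 1 ≤ j → j < k → a j = 0) :
    Tendsto (fun ζ : ℂ => ∑ j ∈ Finset.range k, a j * ζ ^ j) (cobounded ℂ) (𝓝 (a 0)) := by
  have he : ∀ ζ : ℂ, ∑ j ∈ Finset.range k, a j * ζ ^ j = a 0 := by
    intro ζ
    rw [Finset.sum_eq_single 0]
    · simp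
    · intro j hj hj0
      rw [h j (by omega) (Finset.mem_range.mp hj), zero_mul]
    · intro h0; exact absurd (Finset.mem_range.mpr (by omega)) h0
  simp only [he]
  exact tendsto_const_nhds

/-- `(↑X)ᶜ ∪ {x}` is open. -/
lemma compl_union_open (X : Finset ℂ) (x : ℂ) : IsOpen (((X : Set ℂ))ᶜ ∪ {x}) := by
  have : ((X : Set ℂ))ᶜ ∪ {x} = ((↑(X.erase x) : Set ℂ))ᶜ := by
    ext ζ
    simp only [Set.mem_union, Set.mem_compl_iff, Finset.mem_coe, Set.mem_singleton_iff,
      Finset.mem_erase]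
    tauto
  rw [this]
  exact (Set.Finite.isClosed (X.erase x).finite_toSet).isOpen_compl

def gcau (i : ℕ) (q : Polynomial ℂ) (ζ : ℂ) : ℂ :=
  q.eval (π i) * ω i +
    ∑ j ∈ (Finset.range (N + 1)).erase i, (ζ - π i) * (q.eval (π j) * ω j / (ζ - π j))

lemma gcau_eq (i : ℕ) (hi : i ∈ Finset.range (N + 1)) (q : Polynomial ℂ) (ζ : ℂ)
    (hζ : ζ ≠ π i) :
    gcau N π ω i q ζ = (ζ - π i) * cau N π ω q ζ := by
  rw [gcau, cau, Finset.mul_sum, ← Finset.add_sum_erase _ _ hi]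
  congr 1
  rw [mul_div_assoc']
  rw [mul_comm (ζ - π i) (eval (π i) q * ω i), mul_div_assoc,
    div_self (sub_ne_zero.mpr hζ), mul_one]

lemma gcau_self (i : ℕ) (q : Polynomial ℂ) : gcau N π ω i q (π i) = q.eval (π i) * ω i := by
  simp [gcau]

lemma gcau_diffOn (hπ : ∀ i ≤ N, ∀ j ≤ N, π i = π j → i = j) (i : ℕ) (hi : i ≤ N)
    (q : Polynomial ℂ) (X : Finset ℂ) (hXin : ∀ j ∈ Finset.range (N + 1), π j ∈ X) :
    DifferentiableOn ℂ (gcau N π ω i q) (((X : Set ℂ))ᶜ ∪ {π i}) := by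
  apply DifferentiableOn.add (differentiableOn_const _)
  apply DifferentiableOn.fun_sum
  intro j hj
  have hjN : j ≤ N := Nat.lt_succ_iff.mp (Finset.mem_range.mp (Finset.mem_of_mem_erase hj))
  have hji : j ≠ i := Finset.ne_of_mem_erase hj
  apply DifferentiableOn.mul (differentiableOn_id.sub (differentiableOn_const _))
  apply DifferentiableOn.div (differentiableOn_const _)
    (differentiableOn_id.sub (differentiableOn_const _))
  intro ζ hζ
  rw [sub_ne_zero]
  rcases hζ with hζ | hζ
  · exact fun h => hζ (h ▸ Finset.mem_coe.mpr (hXin j (Finset.mem_of_mem_erase hj)))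
  · rw [Set.mem_singleton_iff.mp hζ]
    exact fun h => hji ((hπ i hi j hjN h).symm)



/-- Any solution of the DRHP with the asymptotic normalization has the canonical entries. -/
lemma characterize (N : ℕ) (π : ℕ → ℂ)
    (hπ : ∀ i ≤ N, ∀ j ≤ N, π i = π j → i = j)
    (ω : ℕ → ℂ) (hnd : Nondeg N π ω)
    (P : ℕ → Polynomial ℂ)
    (hPm : ∀ n ≤ N, (P n).Monic ∧ (P n).natDegree = n)
    (hPo : ∀ m ≤ N, ∀ n ≤ N, m ≠ n → ipC N π ω (P m) (P n) = 0)
    (w : ℂ → Mat2) (hw : ∀ x ≤ N, w (π x) = !![0, ω x; 0, 0])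
    (k : ℕ) (hk1 : 1 ≤ k) (hkN : k ≤ N)
    (X : Finset ℂ) (hX : X = (Finset.range (N + 1)).image π)
    (m : ℂ → Mat2) (hm : SolvesDRHP X w m) (ha : AsympId k m) :
    ∀ ζ ∉ (X : Set ℂ),
      m ζ 0 0 = (P k).eval ζ ∧
      m ζ 1 0 = (ipC N π ω (P (k - 1)) (P (k - 1)))⁻¹ * (P (k - 1)).eval ζ ∧
      m ζ 0 1 = cau N π ω (P k) ζ ∧
      m ζ 1 1 = (ipC N π ω (P (k - 1)) (P (k - 1)))⁻¹ * cau N π ω (P (k - 1)) ζ := by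
  classical
  set c : ℂ := (ipC N π ω (P (k - 1)) (P (k - 1)))⁻¹ with hc
  have hπin : ∀ j ∈ Finset.range (N + 1), π j ∈ X := fun j hj => by
    rw [hX]; exact Finset.mem_image_of_mem π hj
  have hnotX : ∀ ζ, ζ ∉ (X : Set ℂ) → ∀ j ∈ Finset.range (N + 1), ζ ≠ π j := by
    intro ζ hζ j hj h
    exact hζ (Finset.mem_coe.mpr (h ▸ hπin j hj))
  have hωne : ∀ i ≤ N, ω i ≠ 0 := omega_ne_zero N π ω hπ hnd
  obtain ⟨hdiff, hres⟩ := hm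
  -- asymptotic data, entrywise
  have haentry : ∀ r : Fin 2,
      Tendsto (fun ζ : ℂ => m ζ r 0 * ζ⁻¹ ^ k) (cobounded ℂ) (𝓝 ((1 : Mat2) r 0)) ∧
      Tendsto (fun ζ : ℂ => m ζ r 1 * ζ ^ k) (cobounded ℂ) (𝓝 ((1 : Mat2) r 1)) := by
    intro r
    constructor
    · have h0 := tendsto_entry ha r 0
      refine h0.congr (fun ζ => ?_)
      rw [Matrix.mul_diagonal]
      simp
    · have h1 := tendsto_entry ha r 1
      refine h1.congr (fun ζ => ?_)
      rw [Matrix.mul_diagonal]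
      simp
  -- Step A+B : the first column is given by polynomials
  have colAB : ∀ r : Fin 2, ∃ q : Polynomial ℂ, q.natDegree ≤ k ∧ q.coeff k = (1 : Mat2) r 0 ∧
      ∀ ζ ∉ (X : Set ℂ), m ζ r 0 = q.eval ζ := by
    intro r
    have hglue : ∃ F : ℂ → ℂ, Differentiable ℂ F ∧ ∀ ζ ∉ (X : Set ℂ), F ζ = m ζ r 0 := by
      apply glue X (fun ζ => m ζ r 0) (hdiff r 0)
      intro x hx
      obtain ⟨i, hiN', hπi⟩ := Finset.mem_image.mp (by rwa [hX] at hx)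
      have hiN : i ≤ N := Nat.lt_succ_iff.mp (Finset.mem_range.mp hiN')
      obtain ⟨g, hgdiff, hgeq, hgtend⟩ := hres x hx
      have hwx : w x = !![0, ω i; 0, 0] := by rw [← hπi]; exact hw i hiN
      have hent : Tendsto (fun ζ => (m ζ * w x) r 1) (𝓝[≠] x) (𝓝 (g x r 1)) :=
        tendsto_entry hgtend r 1
      have hform : ∀ ζ, (m ζ * w x) r 1 = m ζ r 0 * ω i := by
        intro ζ
        rw [hwx, Matrix.mul_apply, Fin.sum_univ_two]
        simp
      refine ⟨g x r 1 * (ω i)⁻¹, ?_⟩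
      have h2 := (hent.congr hform).mul_const (ω i)⁻¹
      refine h2.congr (fun ζ => ?_)
      rw [mul_assoc, mul_inv_cancel₀ (hωne i hiN), mul_one]
    obtain ⟨F, hFdiff, hFeq⟩ := hglue
    have hFasymp : Tendsto (fun ζ : ℂ => F ζ * ζ⁻¹ ^ k) (cobounded ℂ) (𝓝 ((1 : Mat2) r 0)) := by
      refine ((haentry r).1).congr' ?_
      filter_upwards [ev_notin X] with ζ hζ
      rw [hFeq ζ hζ]
    obtain ⟨q, hq1, hq2, hq3⟩ := entire_poly_growth k F hFdiff _ hFasymp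
    exact ⟨q, hq1, hq2, fun ζ hζ => by rw [← hq3 ζ, hFeq ζ hζ]⟩
  -- Step C : second column is the Cauchy transform of the first
  have colC : ∀ r : Fin 2, ∀ q : Polynomial ℂ, (∀ ζ ∉ (X : Set ℂ), m ζ r 0 = q.eval ζ) →
      ∀ ζ ∉ (X : Set ℂ), m ζ r 1 = cau N π ω q ζ := by
    intro r q hq
    set φ : ℂ → ℂ := fun ζ => m ζ r 1 - cau N π ω q ζ with hφ
    have hφdiff : DifferentiableOn ℂ φ ((X : Set ℂ))ᶜ :=
      (hdiff r 1).sub (cau_diffOn N π ω q X hπin)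
    have hφlim : ∀ x ∈ X, ∃ L, Tendsto φ (𝓝[≠] x) (𝓝 L) := by
      intro x hx
      obtain ⟨i, hiN', hπi⟩ := Finset.mem_image.mp (by rwa [hX] at hx)
      have hiN : i ≤ N := Nat.lt_succ_iff.mp (Finset.mem_range.mp hiN')
      obtain ⟨g, hgdiff, hgeq, hgtend⟩ := hres x hx
      have hwx : w x = !![0, ω i; 0, 0] := by rw [← hπi]; exact hw i hiN
      -- value of g at x in entry (r,1)
      have hgval : g x r 1 = q.eval x * ω i := by
        have hent : Tendsto (fun ζ => (m ζ * w x) r 1) (𝓝[≠] x) (𝓝 (g x r 1)) :=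
          tendsto_entry hgtend r 1
        have hform : ∀ ζ, (m ζ * w x) r 1 = m ζ r 0 * ω i := by
          intro ζ
          rw [hwx, Matrix.mul_apply, Fin.sum_univ_two]
          simp
        have h1 : Tendsto (fun ζ => m ζ r 0 * ω i) (𝓝[≠] x) (𝓝 (g x r 1)) :=
          hent.congr hform
        have h2 : Tendsto (fun ζ => m ζ r 0 * ω i) (𝓝[≠] x) (𝓝 (q.eval x * ω i)) := by
          have hpoly : Tendsto (fun ζ : ℂ => q.eval ζ * ω i) (𝓝 x) (𝓝 (q.eval x * ω i)) :=
            ((q.continuous : Continuous fun y : ℂ => q.eval y).tendsto x).mul_const _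
          refine (hpoly.mono_left nhdsWithin_le_nhds).congr' ?_
          filter_upwards [ev_nhdsNe_notmem X x] with ξ hξ
          rw [hq ξ hξ]
        exact tendsto_nhds_unique h1 h2
      -- the local model for φ
      set ψ : ℂ → ℂ := fun ζ =>
        ∑ j ∈ (Finset.range (N + 1)).erase i, q.eval (π j) * ω j / (ζ - π j) with hψ
      have hψt : Tendsto ψ (𝓝[≠] x) (𝓝 (ψ x)) := by
        apply Tendsto.mono_left _ nhdsWithin_le_nhds
        apply tendsto_finset_sum
        intro j hj
        have hjN : j ≤ N := Nat.lt_succ_iff.mp (Finset.mem_range.mp (Finset.mem_of_mem_erase hj))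
        have hji : j ≠ i := Finset.ne_of_mem_erase hj
        have hne : x - π j ≠ 0 := by
          rw [← hπi, sub_ne_zero]
          exact fun h => hji (hπ i hiN j hjN h).symm
        exact tendsto_const_nhds.div ((continuous_id.sub continuous_const).tendsto x) hne
      have hgd : DifferentiableAt ℂ (fun ζ => g ζ r 1) x := by
        refine (hgdiff r 1).differentiableAt ((compl_union_open X x).mem_nhds ?_)
        exact Set.mem_union_right _ rfl
      have hdslope : Tendsto (dslope (fun ζ => g ζ r 1) x) (𝓝[≠] x)
          (𝓝 (deriv (fun ζ => g ζ r 1) x)) := by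
        have := (continuousAt_dslope_same.mpr hgd).tendsto
        rw [dslope_same] at this
        exact this.mono_left nhdsWithin_le_nhds
      refine ⟨deriv (fun ζ => g ζ r 1) x - ψ x, ?_⟩
      refine (hdslope.sub hψt).congr' ?_
      filter_upwards [ev_nhdsNe_notmem X x, self_mem_nhdsWithin] with ζ hζX hζx
      have hζx' : ζ ≠ x := hζx
      have hsub : ζ - x ≠ 0 := sub_ne_zero.mpr hζx'
      -- m ζ r 1 = g ζ r 1 / (ζ - x)
      have hm1 : m ζ r 1 = g ζ r 1 / (ζ - x) := by
        rw [hgeq ζ hζX, Matrix.smul_apply, smul_eq_mul, mul_comm, mul_div_assoc,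
          div_self hsub, mul_one]
      -- split the Cauchy sum at i
      have hcs : cau N π ω q ζ = q.eval x * ω i / (ζ - x) + ψ ζ := by
        rw [cau, ← Finset.add_sum_erase _ _ hiN', hπi]
      rw [dslope_of_ne _ hζx', slope_def_field, hφ]
      simp only
      rw [hm1, hcs, hgval]
      field_simp
      ring
    obtain ⟨Φ, hΦdiff, hΦeq⟩ := glue X φ hφdiff hφlim
    have hΦ0 : Tendsto Φ (cobounded ℂ) (𝓝 0) := by
      have hm1t : Tendsto (fun ζ : ℂ => m ζ r 1) (cobounded ℂ) (𝓝 0) := by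
        have h1 := (haentry r).2
        have h2 := h1.mul (tendsto_inv_pow k hk1)
        rw [mul_zero] at h2
        refine h2.congr' ?_
        filter_upwards [ev_ne_zero] with ζ hζ
        rw [mul_assoc, ← mul_pow, mul_inv_cancel₀ hζ, one_pow, mul_one]
      have := (hm1t.sub (cau_tendsto_zero N π ω q))
      rw [sub_zero] at this
      refine this.congr' ?_
      filter_upwards [ev_notin X] with ζ hζ
      rw [hΦeq ζ hζ]
    have hΦconst := entire_eq_const hΦdiff hΦ0
    intro ζ hζ
    have := hΦeq ζ hζ
    rw [hΦconst ζ] at this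
    have : φ ζ = 0 := this.symm
    rw [hφ] at this
    simpa [sub_eq_zero] using this
  obtain ⟨q0, hq0deg, hq0coeff, hq0⟩ := colAB 0
  obtain ⟨q1, hq1deg, hq1coeff, hq1⟩ := colAB 1
  have hcol0 := colC 0 q0 hq0
  have hcol1 := colC 1 q1 hq1
  have hone00 : (1 : Mat2) 0 0 = 1 := by simp [Matrix.one_apply]
  have hone01 : (1 : Mat2) 0 1 = 0 := by simp [Matrix.one_apply]
  have hone10 : (1 : Mat2) 1 0 = 0 := by simp [Matrix.one_apply]
  have hone11 : (1 : Mat2) 1 1 = 1 := by simp [Matrix.one_apply]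
  have moments : ∀ (r : Fin 2) (q : Polynomial ℂ), (∀ ζ ∉ (X : Set ℂ), m ζ r 0 = q.eval ζ) →
      (∀ ζ ∉ (X : Set ℂ), m ζ r 1 = cau N π ω q ζ) →
      ∀ i < k, ipC N π ω q (Polynomial.X ^ i)
        = if i = k - 1 then (1 : Mat2) r 1 else 0 := by
    intro r q hq hcau i hik
    have hasy := (haentry r).2
    have hpolypart : Tendsto (fun ζ : ℂ => ∑ j ∈ Finset.range k,
        ipC N π ω q (Polynomial.X ^ (k - 1 - j)) * ζ ^ j) (cobounded ℂ)
        (𝓝 ((1 : Mat2) r 1 - 0)) := by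
      have h2 := hasy.sub (cau_tendsto_zero N π ω (q * Polynomial.X ^ k))
      refine h2.congr' ?_
      filter_upwards [ev_notin X] with ζ hζ
      rw [hcau ζ hζ, cau_expand N π ω q k ζ (hnotX ζ hζ)]
      ring
    rw [sub_zero] at hpolypart
    have hcoeffs := poly_tendsto_coeffs _ k _ hpolypart
    have hj := hcoeffs (k - 1 - i) (by omega)
    have hidx : k - 1 - (k - 1 - i) = i := by omega
    rw [hidx] at hj
    rw [hj]
    by_cases h : i = k - 1
    · rw [if_pos (by omega), if_pos h]
    · rw [if_neg (by omega), if_neg h]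
  have hm00 : ∀ i < k, ipC N π ω q0 (Polynomial.X ^ i) = 0 := by
    intro i hik
    have := moments 0 q0 hq0 hcol0 i hik
    rw [hone01] at this
    simpa using this
  have hm11 : ∀ i < k, ipC N π ω q1 (Polynomial.X ^ i) = if i = k - 1 then 1 else 0 := by
    intro i hik
    have := moments 1 q1 hq1 hcol1 i hik
    rwa [hone11] at this
  have hkm1N : k - 1 ≤ N := by omega
  obtain ⟨hmonPk, hdegPk⟩ := hPm k hkN
  obtain ⟨hmonPk1, hdegPk1⟩ := hPm (k - 1) hkm1N
  have hq0P : q0 = P k := by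
    have hsub : q0 - P k = 0 := by
      apply hnd (k - 1) hkm1N
      · apply degree_le_pred
        · exact le_trans (Polynomial.natDegree_sub_le _ _)
            (max_le hq0deg (le_of_eq hdegPk))
        · have hPkc : (P k).coeff k = 1 := by
            have h' := hmonPk.coeff_natDegree
            rwa [hdegPk] at h'
          rw [Polynomial.coeff_sub, hq0coeff, hone00, hPkc, sub_self]
      · intro g hg
        have hgnat : g.natDegree ≤ k - 1 := Polynomial.natDegree_le_iff_degree_le.mpr hg
        rw [ipC_sub_left, ipC_monomial_expand N π ω q0 g (k - 1) hgnat,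
          ipC_monomial_expand N π ω (P k) g (k - 1) hgnat]
        rw [Finset.sum_eq_zero, Finset.sum_eq_zero, sub_zero]
        · intro i hi
          rw [ipC_Pn_Xpow_lt N π ω P hPm hPo k hkN i
            (by have := Finset.mem_range.mp hi; omega), mul_zero]
        · intro i hi
          rw [hm00 i (by have := Finset.mem_range.mp hi; omega), mul_zero]
    exact sub_eq_zero.mp hsub
  have hipPP : ipC N π ω (P (k - 1)) (P (k - 1)) ≠ 0 :=
    self_ne_zero N π ω P hnd hPm hPo (k - 1) hkm1N
  have hmom1 : ∀ i < k, ipC N π ω (Polynomial.C c * P (k - 1)) (Polynomial.X ^ i)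
      = if i = k - 1 then 1 else 0 := by
    intro i hik
    rw [ipC_C_mul_left]
    by_cases h : i = k - 1
    · rw [if_pos h, h, ipC_Pn_Xpow_self N π ω P hPm hPo (k - 1) hkm1N, hc,
        inv_mul_cancel₀ hipPP]
    · rw [if_neg h, ipC_Pn_Xpow_lt N π ω P hPm hPo (k - 1) hkm1N i (by omega), mul_zero]
  have hq1P : q1 = Polynomial.C c * P (k - 1) := by
    have hsub : q1 - Polynomial.C c * P (k - 1) = 0 := by
      apply hnd (k - 1) hkm1N
      · apply degree_le_pred
        · refine le_trans (Polynomial.natDegree_sub_le _ _) (max_le hq1deg ?_)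
          exact le_trans (Polynomial.natDegree_C_mul_le _ _) (by omega)
        · rw [Polynomial.coeff_sub, hq1coeff, hone10, Polynomial.coeff_C_mul,
            Polynomial.coeff_eq_zero_of_natDegree_lt (by omega : (P (k - 1)).natDegree < k),
            mul_zero, sub_self]
      · intro g hg
        have hgnat : g.natDegree ≤ k - 1 := Polynomial.natDegree_le_iff_degree_le.mpr hg
        rw [ipC_sub_left, ipC_monomial_expand N π ω q1 g (k - 1) hgnat,
          ipC_monomial_expand N π ω (Polynomial.C c * P (k - 1)) g (k - 1) hgnat]
        rw [sub_eq_zero]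
        apply Finset.sum_congr rfl
        intro i hi
        have hik : i < k := by have := Finset.mem_range.mp hi; omega
        rw [hm11 i hik, hmom1 i hik]
    exact sub_eq_zero.mp hsub
  intro ζ hζ
  refine ⟨?_, ?_, ?_, ?_⟩
  · rw [hq0 ζ hζ, hq0P]
  · rw [hq1 ζ hζ, hq1P, Polynomial.eval_mul, Polynomial.eval_C, hc]
  · rw [hcol0 ζ hζ, hq0P]
  · rw [hcol1 ζ hζ, hq1P, cau_C_mul, hc]

lemma fin2_cases (i : Fin 2) : i = 0 ∨ i = 1 := by
  fin_cases i
  · exact Or.inl rfl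
  · exact Or.inr rfl

lemma existence (N : ℕ) (π : ℕ → ℂ)
    (hπ : ∀ i ≤ N, ∀ j ≤ N, π i = π j → i = j)
    (ω : ℕ → ℂ) (hnd : Nondeg N π ω)
    (P : ℕ → Polynomial ℂ)
    (hPm : ∀ n ≤ N, (P n).Monic ∧ (P n).natDegree = n)
    (hPo : ∀ m ≤ N, ∀ n ≤ N, m ≠ n → ipC N π ω (P m) (P n) = 0)
    (w : ℂ → Mat2) (hw : ∀ x ≤ N, w (π x) = !![0, ω x; 0, 0])
    (k : ℕ) (hk1 : 1 ≤ k) (hkN : k ≤ N)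
    (X : Finset ℂ) (hX : X = (Finset.range (N + 1)).image π) :
    ∃ m : ℂ → Mat2, SolvesDRHP X w m ∧ AsympId k m ∧
      ∀ ζ ∉ (X : Set ℂ),
        m ζ 0 0 = (P k).eval ζ ∧
        m ζ 1 0 = (ipC N π ω (P (k - 1)) (P (k - 1)))⁻¹ * (P (k - 1)).eval ζ := by
  classical
  set c : ℂ := (ipC N π ω (P (k - 1)) (P (k - 1)))⁻¹ with hc
  have hπin : ∀ j ∈ Finset.range (N + 1), π j ∈ X := fun j hj => by
    rw [hX]; exact Finset.mem_image_of_mem π hj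
  have hnotX : ∀ ζ, ζ ∉ (X : Set ℂ) → ∀ j ∈ Finset.range (N + 1), ζ ≠ π j := by
    intro ζ hζ j hj h
    exact hζ (Finset.mem_coe.mpr (h ▸ hπin j hj))
  have hkm1N : k - 1 ≤ N := by omega
  obtain ⟨hmonPk, hdegPk⟩ := hPm k hkN
  obtain ⟨hmonPk1, hdegPk1⟩ := hPm (k - 1) hkm1N
  have hipPP : ipC N π ω (P (k - 1)) (P (k - 1)) ≠ 0 :=
    self_ne_zero N π ω P hnd hPm hPo (k - 1) hkm1N
  set sol : ℂ → Mat2 := fun ζ => !![(P k).eval ζ, cau N π ω (P k) ζ;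
      c * (P (k - 1)).eval ζ, c * cau N π ω (P (k - 1)) ζ] with hsol
  have e00 : ∀ ζ, sol ζ 0 0 = (P k).eval ζ := fun ζ => by rw [hsol]; simp
  have e01 : ∀ ζ, sol ζ 0 1 = cau N π ω (P k) ζ := fun ζ => by rw [hsol]; simp
  have e10 : ∀ ζ, sol ζ 1 0 = c * (P (k - 1)).eval ζ := fun ζ => by rw [hsol]; simp
  have e11 : ∀ ζ, sol ζ 1 1 = c * cau N π ω (P (k - 1)) ζ := fun ζ => by rw [hsol]; simp
  refine ⟨sol, ⟨?_, ?_⟩, ?_, ?_⟩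
  · -- EntryDiffOn
    intro r s
    rcases fin2_cases r with rfl | rfl <;> rcases fin2_cases s with rfl | rfl
    · exact ((P k).differentiable.differentiableOn).congr (fun ζ _ => e00 ζ)
    · exact (cau_diffOn N π ω (P k) X hπin).congr (fun ζ _ => e01 ζ)
    · exact (((P (k - 1)).differentiable.const_mul c).differentiableOn).congr
        (fun ζ _ => e10 ζ)
    · exact ((cau_diffOn N π ω (P (k - 1)) X hπin).const_smul c).congr
        (fun ζ _ => by rw [e11 ζ]; simp)
  · -- residue conditions
    intro x hx
    obtain ⟨i, hiN', hπi⟩ := Finset.mem_image.mp (by rwa [hX] at hx)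
    have hiN : i ≤ N := Nat.lt_succ_iff.mp (Finset.mem_range.mp hiN')
    have hwx : w x = !![0, ω i; 0, 0] := by rw [← hπi]; exact hw i hiN
    set g : ℂ → Mat2 := fun ζ => !![(ζ - π i) * (P k).eval ζ, gcau N π ω i (P k) ζ;
        c * ((ζ - π i) * (P (k - 1)).eval ζ), c * gcau N π ω i (P (k - 1)) ζ] with hg
    have f00 : ∀ ζ, g ζ 0 0 = (ζ - π i) * (P k).eval ζ := fun ζ => by rw [hg]; simp
    have f01 : ∀ ζ, g ζ 0 1 = gcau N π ω i (P k) ζ := fun ζ => by rw [hg]; simp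
    have f10 : ∀ ζ, g ζ 1 0 = c * ((ζ - π i) * (P (k - 1)).eval ζ) := fun ζ => by rw [hg]; simp
    have f11 : ∀ ζ, g ζ 1 1 = c * gcau N π ω i (P (k - 1)) ζ := fun ζ => by rw [hg]; simp
    have hUx : (((X : Set ℂ))ᶜ ∪ {x}) = (((X : Set ℂ))ᶜ ∪ {π i}) := by rw [hπi]
    refine ⟨g, ?_, ?_, ?_⟩
    · intro r s
      rcases fin2_cases r with rfl | rfl <;> rcases fin2_cases s with rfl | rfl
      · exact (((differentiable_id.sub (differentiable_const _)).mul
          (P k).differentiable).differentiableOn).congr (fun ζ _ => f00 ζ)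
      · refine ((gcau_diffOn N π ω hπ i hiN (P k) X hπin).mono ?_).congr (fun ζ _ => f01 ζ)
        rw [hUx]
      · exact ((((differentiable_id.sub (differentiable_const _)).mul
          (P (k - 1)).differentiable).const_mul c).differentiableOn).congr (fun ζ _ => f10 ζ)
      · refine (((gcau_diffOn N π ω hπ i hiN (P (k - 1)) X hπin).mono ?_).const_smul c).congr
          (fun ζ _ => by rw [f11 ζ]; simp)
        rw [hUx]
    · intro ζ hζ
      have hζπ : ζ ≠ π i := hnotX ζ hζ i hiN'
      ext r s
      rcases fin2_cases r with rfl | rfl <;> rcases fin2_cases s with rfl | rfl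
      · rw [f00 ζ, Matrix.smul_apply, e00 ζ, smul_eq_mul, hπi]
      · rw [f01 ζ, Matrix.smul_apply, e01 ζ, smul_eq_mul, ← hπi,
          gcau_eq N π ω i hiN' (P k) ζ hζπ]
      · rw [f10 ζ, Matrix.smul_apply, e10 ζ, smul_eq_mul, hπi]; ring
      · rw [f11 ζ, Matrix.smul_apply, e11 ζ, smul_eq_mul, ← hπi,
          gcau_eq N π ω i hiN' (P (k - 1)) ζ hζπ]; ring
    · -- the limit of sol ζ * w x
      apply tendsto_mat2
      intro r s
      have hprod : ∀ ζ, (sol ζ * w x) r s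
          = !![0, (P k).eval ζ * ω i; 0, c * (P (k - 1)).eval ζ * ω i] r s := by
        intro ζ
        rw [Matrix.mul_apply, Fin.sum_univ_two, hwx]
        rcases fin2_cases r with rfl | rfl <;> rcases fin2_cases s with rfl | rfl <;>
          simp [e00, e01, e10, e11] <;> ring
      simp only [hprod]
      rcases fin2_cases r with rfl | rfl <;> rcases fin2_cases s with rfl | rfl
      · -- entry (0,0): constant 0
        have : g x 0 0 = 0 := by rw [f00, ← hπi, sub_self, zero_mul]
        rw [this]
        simpa using (tendsto_const_nhds :
          Tendsto (fun _ : ℂ => (0 : ℂ)) (𝓝[≠] x) (𝓝 0))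
      · have : g x 0 1 = (P k).eval x * ω i := by
          rw [f01, ← hπi, gcau_self]
        rw [this]
        have hcont : Tendsto (fun ζ : ℂ => (P k).eval ζ * ω i) (𝓝 x)
            (𝓝 ((P k).eval x * ω i)) :=
          (((P k).continuous : Continuous fun y : ℂ => (P k).eval y).tendsto x).mul_const _
        exact (hcont.mono_left nhdsWithin_le_nhds).congr (fun ζ => by simp)
      · have : g x 1 0 = 0 := by rw [f10, ← hπi, sub_self, zero_mul, mul_zero]
        rw [this]
        simpa using (tendsto_const_nhds :
          Tendsto (fun _ : ℂ => (0 : ℂ)) (𝓝[≠] x) (𝓝 0))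
      · have : g x 1 1 = c * (P (k - 1)).eval x * ω i := by
          rw [f11, ← hπi, gcau_self]; ring
        rw [this]
        have hcont : Tendsto (fun ζ : ℂ => c * (P (k - 1)).eval ζ * ω i) (𝓝 x)
            (𝓝 (c * (P (k - 1)).eval x * ω i)) := by
          have := (((P (k - 1)).continuous :
            Continuous fun y : ℂ => (P (k - 1)).eval y).tendsto x).const_mul c
          exact this.mul_const _
        exact (hcont.mono_left nhdsWithin_le_nhds).congr (fun ζ => by simp)
  · -- AsympId
    apply tendsto_mat2
    intro r s
    have hent : ∀ ζ : ℂ, (sol ζ * Matrix.diagonal ![ζ⁻¹ ^ k, ζ ^ k]) r s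
        = sol ζ r s * (![ζ⁻¹ ^ k, ζ ^ k]) s := fun ζ => Matrix.mul_diagonal _ _ _ _
    simp only [hent]
    rcases fin2_cases r with rfl | rfl <;> rcases fin2_cases s with rfl | rfl
    · -- (0,0)
      have h := tendsto_poly_inv_pow (P k) k (le_of_eq hdegPk)
      have hco : (P k).coeff k = 1 := by
        have h' := hmonPk.coeff_natDegree
        rwa [hdegPk] at h'
      rw [hco] at h
      have hone : (1 : Mat2) 0 0 = 1 := by simp [Matrix.one_apply]
      rw [hone]
      exact h.congr (fun ζ => by rw [e00 ζ]; simp)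
    · -- (0,1)
      have h := cau_tendsto_zero N π ω (P k * Polynomial.X ^ k)
      have hone : (1 : Mat2) 0 1 = 0 := by simp [Matrix.one_apply]
      rw [hone]
      refine h.congr' ?_
      filter_upwards [ev_notin X] with ζ hζ
      rw [e01 ζ]
      simp only [Matrix.cons_val_one, Matrix.head_cons, Matrix.cons_val_zero]
      rw [cau_expand N π ω (P k) k ζ (hnotX ζ hζ), Finset.sum_eq_zero, zero_add]
      intro j hj
      rw [ipC_Pn_Xpow_lt N π ω P hPm hPo k hkN (k - 1 - j) (by omega), zero_mul]
    · -- (1,0)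
      have h := (tendsto_poly_inv_pow (P (k - 1)) k (by omega)).const_mul c
      have hco : (P (k - 1)).coeff k = 0 :=
        Polynomial.coeff_eq_zero_of_natDegree_lt (by omega)
      rw [hco, mul_zero] at h
      have hone : (1 : Mat2) 1 0 = 0 := by simp [Matrix.one_apply]
      rw [hone]
      exact h.congr (fun ζ => by rw [e10 ζ]; simp; ring)
    · -- (1,1)
      set a : ℕ → ℂ := fun j => ipC N π ω (P (k - 1)) (Polynomial.X ^ (k - 1 - j)) with ha
      have h1 : Tendsto (fun ζ : ℂ => ∑ j ∈ Finset.range k, a j * ζ ^ j) (cobounded ℂ)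
          (𝓝 (a 0)) := by
        apply tendsto_sum_pow a k hk1
        intro j hj1 hjk
        rw [ha]
        exact ipC_Pn_Xpow_lt N π ω P hPm hPo (k - 1) hkm1N (k - 1 - j) (by omega)
      have ha0 : a 0 = ipC N π ω (P (k - 1)) (P (k - 1)) := by
        rw [ha]
        simp only [Nat.sub_zero]
        exact ipC_Pn_Xpow_self N π ω P hPm hPo (k - 1) hkm1N
      have h2 := cau_tendsto_zero N π ω (P (k - 1) * Polynomial.X ^ k)
      have h3 := (h1.add h2).const_mul c
      rw [add_zero, ha0, hc, inv_mul_cancel₀ hipPP] at h3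
      have hone : (1 : Mat2) 1 1 = 1 := by simp [Matrix.one_apply]
      rw [hone]
      refine h3.congr' ?_
      filter_upwards [ev_notin X] with ζ hζ
      simp only [ha]
      rw [← cau_expand N π ω (P (k - 1)) k ζ (hnotX ζ hζ)]
      rw [e11 ζ]
      simp only [Matrix.cons_val_one, Matrix.head_cons, Matrix.cons_val_zero]
      ring
  · intro ζ hζ
    exact ⟨e00 ζ, e10 ζ⟩

end DRHP

/-- solution of the DRHP in terms of orthogonal polynomials. -/
theorem stmt1 (N : ℕ) (π : ℕ → ℂ)
    (hπ : ∀ i ≤ N, ∀ j ≤ N, π i = π j → i = j)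
    (ω : ℕ → ℂ) (hnd : Nondeg N π ω)
    (P : ℕ → Polynomial ℂ)
    (hPm : ∀ n ≤ N, (P n).Monic ∧ (P n).natDegree = n)
    (hPo : ∀ m ≤ N, ∀ n ≤ N, m ≠ n → ipC N π ω (P m) (P n) = 0)
    (w : ℂ → Mat2) (hw : ∀ x ≤ N, w (π x) = !![0, ω x; 0, 0])
    (k : ℕ) (hk1 : 1 ≤ k) (hkN : k ≤ N)
    (X : Finset ℂ) (hX : X = (Finset.range (N + 1)).image π) :
    (∃ m : ℂ → Mat2, SolvesDRHP X w m ∧ AsympId k m ∧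
      ∀ ζ ∉ (X : Set ℂ),
        m ζ 0 0 = (P k).eval ζ ∧
        m ζ 1 0 = (ipC N π ω (P (k - 1)) (P (k - 1)))⁻¹ * (P (k - 1)).eval ζ) ∧
    (∀ m m' : ℂ → Mat2, SolvesDRHP X w m → AsympId k m →
      SolvesDRHP X w m' → AsympId k m' → ∀ ζ ∉ (X : Set ℂ), m ζ = m' ζ) := by
  constructor
  · exact DRHP.existence N π hπ ω hnd P hPm hPo w hw k hk1 hkN X hX
  · intro m m' hm ha hm' ha' ζ hζ
    obtain ⟨a1, b1, c1, d1⟩ :=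
      DRHP.characterize N π hπ ω hnd P hPm hPo w hw k hk1 hkN X hX m hm ha ζ hζ
    obtain ⟨a2, b2, c2, d2⟩ :=
      DRHP.characterize N π hπ ω hnd P hPm hPo w hw k hk1 hkN X hX m' hm' ha' ζ hζ
    ext r s
    rcases DRHP.fin2_cases r with rfl | rfl <;> rcases DRHP.fin2_cases s with rfl | rfl
    · rw [a1, a2]
    · rw [c1, c2]
    · rw [b1, b2]
    · rw [d1, d2]
end
end

section
/- Let π_0,…,π_s be distinct points of ℝ, let ω(0),…,ω(s) be strictly positive reals, set w(π_x) = [[0, ω(x)],[0,0]], and fix an integer k with 1 ≤ k ≤ s. Let m be the solution of the discrete Riemann–Hilbert problem on {π_0,…,π_{s−1}} and m′ the solution on {π_0,…,π_s}, both with the jump matrices w and both satisfying m(ζ)·diag(ζ^{−k}, ζ^{k}) → I and m′(ζ)·diag(ζ^{−k}, ζ^{k}) → I as ζ → ∞. Then there exists a matrix A ∈ Mat(2,ℂ) with A² = 0 such that m′(ζ) = (I + (ζ−π_s)^{−1}A)·m(ζ) for every ζ ∈ ℂ∖{π_0,…,π_s}. -/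
open Filter Topology Matrix Polynomial

noncomputable section

/-- The finite set `{π 0, …, π (s-1)}` regarded as a finite subset of `ℂ`. -/
def Zset (π : ℕ → ℝ) (s : ℕ) : Finset ℂ :=
  (Finset.range s).image fun x => (π x : ℂ)

open Bornology Set
/-- openness of complement-of-finite-set union a point -/
lemma aux_open (Z : Finset ℂ) (x : ℂ) : IsOpen ((↑Z : Set ℂ)ᶜ ∪ {x}) := by
  have h : ((↑Z : Set ℂ)ᶜ ∪ {x}) = ((↑Z : Set ℂ) \ {x})ᶜ := by
    ext z; by_cases hz : z = x <;> simp [hz]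
  rw [h]
  exact ((Z.finite_toSet.diff (t := {x})).isClosed).isOpen_compl

lemma aux_mem_nhds (Z : Finset ℂ) (x : ℂ) : ((↑Z : Set ℂ)ᶜ ∪ {x}) ∈ 𝓝 x :=
  (aux_open Z x).mem_nhds (by simp)

lemma eventually_not_mem (Z : Finset ℂ) (x : ℂ) :
    ∀ᶠ ζ in 𝓝[≠] x, ζ ∉ (↑Z : Set ℂ) := by
  filter_upwards [mem_nhdsWithin_of_mem_nhds (aux_mem_nhds Z x),
    self_mem_nhdsWithin] with ζ h1 h2
  rcases h1 with h | h
  · exact h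
  · exact absurd h h2

lemma eventually_cobounded_not_mem (Z : Finset ℂ) :
    ∀ᶠ ζ in cobounded ℂ, ζ ∉ (↑Z : Set ℂ) :=
  (isBounded_def).mp Z.finite_toSet.isBounded

lemma eventually_cobounded_ne (a : ℂ) : ∀ᶠ ζ in cobounded ℂ, ζ ≠ a := by
  have := eventually_cobounded_not_mem {a}
  simpa using this

/-- Liouville: an entire function with a limit at infinity is constant. -/
lemma liouville_tendsto {f : ℂ → ℂ} (hf : Differentiable ℂ f) {c : ℂ}
    (h : Tendsto f (cobounded ℂ) (𝓝 c)) : ∀ z, f z = c := by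
  have hball : {z : ℂ | f z ∈ Metric.ball c 1} ∈ cobounded ℂ :=
    h (Metric.ball_mem_nhds c one_pos)
  have hSb : IsBounded {z : ℂ | f z ∈ Metric.ball c 1}ᶜ := by
    rw [isBounded_def, compl_compl]; exact hball
  obtain ⟨R, hR⟩ := hSb.subset_closedBall 0
  have himg : IsBounded (f '' Metric.closedBall 0 R) :=
    ((isCompact_closedBall (0:ℂ) R).image hf.continuous).isBounded
  have hb : IsBounded (Set.range f) := by
    have : Set.range f ⊆ Metric.ball c 1 ∪ f '' Metric.closedBall 0 R := by
      rintro - ⟨z, rfl⟩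
      by_cases hz : f z ∈ Metric.ball c 1
      · exact Or.inl hz
      · exact Or.inr ⟨z, hR hz, rfl⟩
    exact (Metric.isBounded_ball.union himg).subset this
  intro z
  have hconst : ∀ w, f w = f z := fun w => hf.apply_eq_apply_of_bounded hb w z
  have h2 : Tendsto f (cobounded ℂ) (𝓝 (f z)) := by
    have : Tendsto (fun _ : ℂ => f z) (cobounded ℂ) (𝓝 (f z)) := tendsto_const_nhds
    exact this.congr fun w => (hconst w).symm
  exact tendsto_nhds_unique h2 h

/-- Glue removable singularities over a finite set. -/
lemma glue_lemma (Z : Finset ℂ) (f : ℂ → ℂ)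
    (hf : DifferentiableOn ℂ f (↑Z : Set ℂ)ᶜ)
    (hl : ∀ x ∈ Z, ∃ L, Tendsto f (𝓝[≠] x) (𝓝 L)) :
    ∃ F : ℂ → ℂ, Differentiable ℂ F ∧ ∀ z ∉ (↑Z : Set ℂ), F z = f z := by
  induction Z using Finset.induction_on generalizing f with
  | empty =>
    refine ⟨f, ?_, fun z _ => rfl⟩
    rw [← differentiableOn_univ]
    simpa using hf
  | @insert x Z' hx ih =>
    set f1 := Function.update f x (limUnder (𝓝[≠] x) f) with hf1
    have hZ'c : (↑Z' : Set ℂ)ᶜ ∈ 𝓝 x :=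
      (Z'.finite_toSet.isClosed.isOpen_compl).mem_nhds (by simpa using hx)
    obtain ⟨L, hL⟩ := hl x (Finset.mem_insert_self x Z')
    have hdiff : DifferentiableOn ℂ f1 (↑Z' : Set ℂ)ᶜ := by
      apply Complex.differentiableOn_update_limUnder_of_isLittleO hZ'c
      · have : (↑Z' : Set ℂ)ᶜ \ {x} = (↑(insert x Z') : Set ℂ)ᶜ := by
          ext z; simp [and_comm, not_or]
        rw [this]; exact hf
      · exact Filter.IsBoundedUnder.isLittleO_sub_self_inv
          ((hL.sub_const (f x)).norm.isBoundedUnder_le)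
    have hl1 : ∀ y ∈ Z', ∃ L, Tendsto f1 (𝓝[≠] y) (𝓝 L) := by
      intro y hy
      obtain ⟨L', hL'⟩ := hl y (Finset.mem_insert_of_mem hy)
      refine ⟨L', hL'.congr' ?_⟩
      have hxy : x ≠ y := fun h => hx (h ▸ hy)
      have hyne : y ∈ {z : ℂ | z ≠ x} := Ne.symm hxy
      filter_upwards [mem_nhdsWithin_of_mem_nhds
        (isOpen_ne.mem_nhds hyne)] with ζ (hζ : ζ ≠ x)
      exact (Function.update_of_ne hζ _ f).symm
    obtain ⟨F, hF, hFf⟩ := ih f1 hdiff hl1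
    refine ⟨F, hF, fun z hz => ?_⟩
    have hz' : z ∉ (↑Z' : Set ℂ) := fun h => hz (by simpa using Or.inr (by simpa using h))
    have hzx : z ≠ x := fun h => hz (by simp [h])
    rw [hFf z hz', hf1, Function.update_of_ne hzx]

lemma entire_eq_const (Z : Finset ℂ) (f : ℂ → ℂ)
    (hf : DifferentiableOn ℂ f (↑Z : Set ℂ)ᶜ)
    (hl : ∀ x ∈ Z, ∃ L, Tendsto f (𝓝[≠] x) (𝓝 L))
    {c : ℂ} (hc : Tendsto f (cobounded ℂ) (𝓝 c)) :
    ∀ z ∉ (↑Z : Set ℂ), f z = c := by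
  obtain ⟨F, hF, hFf⟩ := glue_lemma Z f hf hl
  have hFc : Tendsto F (cobounded ℂ) (𝓝 c) := by
    refine hc.congr' ?_
    filter_upwards [eventually_cobounded_not_mem Z] with ζ hζ
    exact (hFf ζ hζ).symm
  intro z hz
  rw [← hFf z hz]
  exact liouville_tendsto hF hFc z

/-- limits of functions with a simple-pole-looking expression whose numerator vanishes -/
lemma tendsto_helper {x : ℂ} (u v g f : ℂ → ℂ)
    (hu : DifferentiableAt ℂ u x) (hux : u x = 0) (hv : ContinuousAt v x)
    (hg : ContinuousAt g x)
    (hev : ∀ᶠ ζ in 𝓝[≠] x, f ζ = g ζ * ((ζ - x)⁻¹ * u ζ + v ζ)) :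
    ∃ L, Tendsto f (𝓝[≠] x) (𝓝 L) := by
  have hφ : ContinuousAt (fun ζ => g ζ * (dslope u x ζ + v ζ)) x :=
    hg.mul ((continuousAt_dslope_same.2 hu).add hv)
  refine ⟨g x * (dslope u x x + v x), ?_⟩
  refine Tendsto.congr' ?_ (hφ.tendsto.mono_left nhdsWithin_le_nhds)
  filter_upwards [hev, self_mem_nhdsWithin] with ζ h1 (h2 : ζ ≠ x)
  rw [h1, dslope_of_ne _ h2, slope_def_field, hux, sub_zero, div_eq_inv_mul]

lemma matrix_tendsto_entry {α : Type*} {l : Filter α} {f : α → Mat2} {M : Mat2}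
    (h : Tendsto f l (𝓝 M)) (i j : Fin 2) :
    Tendsto (fun a => f a i j) l (𝓝 (M i j)) := by
  have h1 := (tendsto_pi_nhds.1 h) i
  exact (tendsto_pi_nhds.1 h1) j


/-- Pole decomposition of a DRHP solution at a jump point with nilpotent upper-triangular jump. -/
lemma pole_decomp (Z : Finset ℂ) (w : ℂ → Mat2) (m : ℂ → Mat2)
    (hm : SolvesDRHP Z w m) {x : ℂ} (hx : x ∈ Z) {ω : ℂ} (hω : ω ≠ 0)
    (hwx : w x = !![0, ω; 0, 0]) :
    ∃ h : ℂ → Mat2, EntryDiffOn h ((↑Z : Set ℂ)ᶜ ∪ {x}) ∧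
      ∀ ζ, ζ ∉ (↑Z : Set ℂ) →
        m ζ = (ζ - x)⁻¹ • !![0, ω * h x 0 0; 0, ω * h x 1 0] + h ζ := by
  obtain ⟨g, hg, hgz, hgt⟩ := hm.2 x hx
  set U : Set ℂ := (↑Z : Set ℂ)ᶜ ∪ {x} with hU
  have hUx : U ∈ 𝓝 x := aux_mem_nhds Z x
  set h : ℂ → Mat2 := fun ζ => Matrix.of fun i j => dslope (fun z => g z i j) x ζ with hh
  have hhd : EntryDiffOn h U := fun i j => (Complex.differentiableOn_dslope hUx).2 (hg i j)
  have hhval : ∀ ζ, ζ ∉ (↑Z : Set ℂ) → ∀ i j,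
      m ζ i j = (ζ - x)⁻¹ * g x i j + h ζ i j := by
    intro ζ hζ i j
    have hζx : ζ ≠ x := by rintro rfl; exact hζ (by exact_mod_cast hx)
    have hgval : g ζ i j = (ζ - x) * m ζ i j := by
      rw [hgz ζ hζ]; simp [Matrix.smul_apply, smul_eq_mul]
    have : h ζ i j = (g ζ i j - g x i j) / (ζ - x) := by
      simp only [hh, Matrix.of_apply, dslope_of_ne _ hζx, slope_def_field]
    rw [this, hgval]
    field_simp [sub_ne_zero.2 hζx]
    all_goals ring
  -- continuity of entries of h at x
  have hhc : ∀ i j, ContinuousAt (fun ζ => h ζ i j) x :=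
    fun i j => ((hhd i j).differentiableAt hUx).continuousAt
  -- eventually off Z near x
  have hev := eventually_not_mem Z x
  -- entries of m * w x
  have hmw : ∀ ζ, ζ ∉ (↑Z : Set ℂ) → ∀ i,
      (m ζ * w x) i 0 = 0 ∧ (m ζ * w x) i 1 = m ζ i 0 * ω := by
    intro ζ hζ i
    constructor <;>
      simp [hwx, Matrix.mul_apply, Fin.sum_univ_two, Matrix.cons_val_zero,
        Matrix.cons_val_one, Matrix.head_cons]
  -- first column of g x vanishes
  have hgx0 : ∀ i, g x i 0 = 0 := by
    intro i
    have h1 : Tendsto (fun ζ => (m ζ * w x) i 0) (𝓝[≠] x) (𝓝 (g x i 0)) :=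
      matrix_tendsto_entry hgt i 0
    have h2 : Tendsto (fun ζ => (m ζ * w x) i 0) (𝓝[≠] x) (𝓝 0) := by
      refine Tendsto.congr' ?_ tendsto_const_nhds
      filter_upwards [hev] with ζ hζ
      exact ((hmw ζ hζ i).1).symm
    exact tendsto_nhds_unique h1 h2
  -- second column of g x
  have hgx1 : ∀ i, g x i 1 = ω * h x i 0 := by
    intro i
    have h1 : Tendsto (fun ζ => (m ζ * w x) i 1) (𝓝[≠] x) (𝓝 (g x i 1)) :=
      matrix_tendsto_entry hgt i 1
    have h2 : Tendsto (fun ζ => (m ζ * w x) i 1) (𝓝[≠] x) (𝓝 (ω * h x i 0)) := by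
      have h3 : Tendsto (fun ζ => h ζ i 0 * ω) (𝓝[≠] x) (𝓝 (h x i 0 * ω)) :=
        ((hhc i 0).tendsto.mono_left nhdsWithin_le_nhds).mul tendsto_const_nhds
      rw [mul_comm ω]
      refine Tendsto.congr' ?_ h3
      filter_upwards [hev] with ζ hζ
      rw [(hmw ζ hζ i).2, hhval ζ hζ i 0, hgx0 i]
      ring
    exact tendsto_nhds_unique h1 h2
  refine ⟨h, hhd, fun ζ hζ => ?_⟩
  ext i j
  rw [Matrix.add_apply, Matrix.smul_apply, smul_eq_mul, hhval ζ hζ i j]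
  congr 2
  fin_cases i <;> fin_cases j <;>
    simp [hgx0, hgx1, Matrix.cons_val_zero, Matrix.cons_val_one, Matrix.head_cons]

/-- The determinant of a normalized DRHP solution is identically 1 off `Z`. -/
lemma det_one (Z : Finset ℂ) (w : ℂ → Mat2) (m : ℂ → Mat2) (k : ℕ)
    (hm : SolvesDRHP Z w m) (hma : AsympId k m)
    (hwZ : ∀ x ∈ Z, ∃ ω : ℂ, ω ≠ 0 ∧ w x = !![0, ω; 0, 0]) :
    ∀ ζ, ζ ∉ (↑Z : Set ℂ) → m ζ 0 0 * m ζ 1 1 - m ζ 0 1 * m ζ 1 0 = 1 := by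
  set f : ℂ → ℂ := fun ζ => m ζ 0 0 * m ζ 1 1 - m ζ 0 1 * m ζ 1 0 with hf
  have hfd : DifferentiableOn ℂ f (↑Z : Set ℂ)ᶜ :=
    ((hm.1 0 0).mul (hm.1 1 1)).sub ((hm.1 0 1).mul (hm.1 1 0))
  have hl : ∀ x ∈ Z, ∃ L, Tendsto f (𝓝[≠] x) (𝓝 L) := by
    intro x hx
    obtain ⟨ω, hω, hwx⟩ := hwZ x hx
    obtain ⟨h, hhd, hdec⟩ := pole_decomp Z w m hm hx hω hwx
    have hUx : ((↑Z : Set ℂ)ᶜ ∪ {x}) ∈ 𝓝 x := aux_mem_nhds Z x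
    have hdiff : ∀ i j, DifferentiableAt ℂ (fun ζ => h ζ i j) x :=
      fun i j => (hhd i j).differentiableAt hUx
    have hcont : ∀ i j, ContinuousAt (fun ζ => h ζ i j) x :=
      fun i j => (hdiff i j).continuousAt
    apply tendsto_helper
      (u := fun ζ => h ζ 0 0 * (ω * h x 1 0) - (ω * h x 0 0) * h ζ 1 0)
      (v := fun ζ => h ζ 0 0 * h ζ 1 1 - h ζ 0 1 * h ζ 1 0)
      (g := fun _ => 1)
    · exact ((hdiff 0 0).mul_const _).sub ((hdiff 1 0).const_mul _)
    · ring
    · exact ((hcont 0 0).mul (hcont 1 1)).sub ((hcont 0 1).mul (hcont 1 0))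
    · exact continuousAt_const
    · filter_upwards [eventually_not_mem Z x] with ζ hζ
      have hd := hdec ζ hζ
      have e : ∀ i j, m ζ i j = (ζ - x)⁻¹ * (!![0, ω * h x 0 0; 0, ω * h x 1 0] i j) + h ζ i j := by
        intro i j; rw [hd, Matrix.add_apply, Matrix.smul_apply, smul_eq_mul]
      rw [hf]
      simp only [e 0 0, e 1 1, e 0 1, e 1 0]
      simp only [Matrix.cons_val_zero, Matrix.cons_val_one, Matrix.head_cons,
        Matrix.cons_val', Matrix.head_fin_const, Matrix.empty_val',
        Matrix.cons_val_fin_one, Matrix.of_apply]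
      ring
  have hasymp : Tendsto f (cobounded ℂ) (𝓝 1) := by
    have hq : ∀ i j, Tendsto (fun ζ => (m ζ * Matrix.diagonal ![ζ⁻¹ ^ k, ζ ^ k]) i j)
        (cobounded ℂ) (𝓝 ((1 : Mat2) i j)) := fun i j => matrix_tendsto_entry hma i j
    have hlim : Tendsto (fun ζ =>
        (m ζ * Matrix.diagonal ![ζ⁻¹ ^ k, ζ ^ k]) 0 0 * (m ζ * Matrix.diagonal ![ζ⁻¹ ^ k, ζ ^ k]) 1 1
        - (m ζ * Matrix.diagonal ![ζ⁻¹ ^ k, ζ ^ k]) 0 1 * (m ζ * Matrix.diagonal ![ζ⁻¹ ^ k, ζ ^ k]) 1 0)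
        (cobounded ℂ) (𝓝 1) := by
      have := ((hq 0 0).mul (hq 1 1)).sub ((hq 0 1).mul (hq 1 0))
      simpa [Matrix.one_apply] using this
    refine Tendsto.congr' ?_ hlim
    filter_upwards [eventually_cobounded_ne 0] with ζ hζ
    have hinv : ζ⁻¹ ^ k * ζ ^ k = 1 := by
      rw [← mul_pow, inv_mul_cancel₀ hζ, one_pow]
    simp only [Matrix.mul_diagonal]
    simp only [Matrix.cons_val_zero, Matrix.cons_val_one, Matrix.head_cons]
    show _ = f ζ
    rw [hf]
    linear_combination (m ζ 0 0 * m ζ 1 1 - m ζ 0 1 * m ζ 1 0) * hinv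
  exact entire_eq_const Z f hfd hl hasymp

lemma decomp_entries {S : Set ℂ} {m h : ℂ → Mat2} {x ω : ℂ}
    (hdec : ∀ ζ, ζ ∉ S → m ζ = (ζ - x)⁻¹ • !![0, ω * h x 0 0; 0, ω * h x 1 0] + h ζ)
    {ζ : ℂ} (hζ : ζ ∉ S) :
    m ζ 0 0 = h ζ 0 0 ∧ m ζ 1 0 = h ζ 1 0 ∧
    m ζ 0 1 = (ζ - x)⁻¹ * (ω * h x 0 0) + h ζ 0 1 ∧
    m ζ 1 1 = (ζ - x)⁻¹ * (ω * h x 1 0) + h ζ 1 1 := by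
  refine ⟨?_, ?_, ?_, ?_⟩ <;>
    · rw [hdec ζ hζ, Matrix.add_apply, Matrix.smul_apply, smul_eq_mul]
      norm_num [Matrix.cons_val_zero, Matrix.cons_val_one, Matrix.head_cons]

lemma inv_shift_tendsto (p : ℂ) :
    Tendsto (fun ζ : ℂ => (ζ - p)⁻¹) (cobounded ℂ) (𝓝 0) := by
  have h1 : Tendsto (fun ζ : ℂ => ‖ζ‖ - ‖p‖) (cobounded ℂ) atTop :=
    tendsto_atTop_add_const_right _ (-‖p‖) tendsto_norm_cobounded_atTop
  have h2 : Tendsto (fun ζ : ℂ => ‖ζ - p‖) (cobounded ℂ) atTop :=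
    tendsto_atTop_mono (fun ζ => norm_sub_norm_le ζ p) h1
  rw [tendsto_zero_iff_norm_tendsto_zero]
  simpa [norm_inv, Pi.inv_def] using h2.inv_tendsto_atTop

/-- the first equation of the Lax pair. -/
theorem stmt2 (s k : ℕ) (hk1 : 1 ≤ k) (hks : k ≤ s)
    (π ω : ℕ → ℝ)
    (hπ : ∀ i ≤ s, ∀ j ≤ s, π i = π j → i = j)
    (hω : ∀ x ≤ s, 0 < ω x)
    (w : ℂ → Mat2) (hw : ∀ x ≤ s, w (π x : ℂ) = !![0, (ω x : ℂ); 0, 0])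
    (m m' : ℂ → Mat2)
    (hm : SolvesDRHP (Zset π s) w m) (hma : AsympId k m)
    (hm' : SolvesDRHP (Zset π (s + 1)) w m') (hm'a : AsympId k m') :
    ∃ A : Mat2, A * A = 0 ∧
      ∀ ζ : ℂ, ζ ∉ (Zset π (s + 1) : Set ℂ) →
        m' ζ = (1 + (ζ - (π s : ℂ))⁻¹ • A) * m ζ := by
  set p : ℂ := ((π s : ℝ) : ℂ) with hp
  set Z : Finset ℂ := Zset π s with hZdef
  set Z' : Finset ℂ := Zset π (s + 1) with hZ'def
  have hZ'eq : Z' = insert p Z := by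
    rw [hZ'def, hZdef, Zset, Zset, Finset.range_add_one, Finset.image_insert]
  have hpZ : p ∉ Z := by
    rw [hZdef, Zset]
    intro hmem
    simp only [Finset.mem_image, Finset.mem_range] at hmem
    obtain ⟨i, hi, hip⟩ := hmem
    rw [hp] at hip
    have hps : π i = π s := by exact_mod_cast hip
    exact absurd (hπ i (le_of_lt hi) s le_rfl hps) (Nat.ne_of_lt hi)
  have hpZ' : p ∈ Z' := by rw [hZ'eq]; exact Finset.mem_insert_self _ _
  have hwZ' : ∀ x ∈ Z', ∃ ω' : ℂ, ω' ≠ 0 ∧ w x = !![0, ω'; 0, 0] := by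
    intro x hx
    rw [hZ'def, Zset] at hx
    simp only [Finset.mem_image, Finset.mem_range] at hx
    obtain ⟨i, hi, rfl⟩ := hx
    have his : i ≤ s := Nat.lt_succ_iff.mp hi
    exact ⟨(ω i : ℂ), by exact_mod_cast (hω i his).ne', hw i his⟩
  have hZsub : ∀ x ∈ Z, x ∈ Z' := by
    intro x hx; rw [hZ'eq]; exact Finset.mem_insert_of_mem hx
  have hwZ : ∀ x ∈ Z, ∃ ω' : ℂ, ω' ≠ 0 ∧ w x = !![0, ω'; 0, 0] :=
    fun x hx => hwZ' x (hZsub x hx)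
  have hZZ' : ∀ ζ : ℂ, ζ ∉ (↑Z' : Set ℂ) → ζ ∉ (↑Z : Set ℂ) ∧ ζ ≠ p := by
    intro ζ h
    rw [hZ'eq] at h
    constructor
    · intro hc; exact h (by simp [Finset.coe_insert]; exact Or.inr hc)
    · intro hc; exact h (by simp [Finset.coe_insert, hc])
  -- determinants are 1
  have hdet := det_one Z w m k hm hma hwZ
  have hdet' := det_one Z' w m' k hm' hm'a hwZ'
  -- the adjugate-type matrix of m
  set madj : ℂ → Mat2 := fun ζ => !![m ζ 1 1, -(m ζ 0 1); -(m ζ 1 0), m ζ 0 0] with hmadj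
  have hmadj_e : ∀ ζ, madj ζ 0 0 = m ζ 1 1 ∧ madj ζ 0 1 = -(m ζ 0 1) ∧
      madj ζ 1 0 = -(m ζ 1 0) ∧ madj ζ 1 1 = m ζ 0 0 := by
    intro ζ
    refine ⟨?_, ?_, ?_, ?_⟩ <;>
      simp [hmadj, Matrix.cons_val_zero, Matrix.cons_val_one, Matrix.head_cons]
  have hmadjd : EntryDiffOn madj (↑Z : Set ℂ)ᶜ := by
    intro i j
    fin_cases i <;> fin_cases j <;>
      simp only [hmadj, Matrix.cons_val_zero, Matrix.cons_val_one, Matrix.head_cons,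
        Matrix.cons_val', Matrix.empty_val', Matrix.cons_val_fin_one, Matrix.of_apply,
        Fin.zero_eta, Fin.mk_one]
    · exact hm.1 1 1
    · exact (hm.1 0 1).neg
    · exact (hm.1 1 0).neg
    · exact hm.1 0 0
  have hmadj_mul : ∀ ζ, ζ ∉ (↑Z : Set ℂ) → madj ζ * m ζ = 1 := by
    intro ζ hζ
    have hd := hdet ζ hζ
    ext i j
    fin_cases i <;> fin_cases j <;>
      simp [hmadj, Matrix.mul_apply, Fin.sum_univ_two, Matrix.one_apply]
    · show m ζ 1 1 * m ζ 0 0 + -(m ζ 0 1 * m ζ 1 0) = 1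
      linear_combination hd
    · show m ζ 1 1 * m ζ 0 1 + -(m ζ 0 1 * m ζ 1 1) = 0
      ring
    · show -(m ζ 1 0 * m ζ 0 0) + m ζ 0 0 * m ζ 1 0 = 0
      ring
    · show -(m ζ 1 0 * m ζ 0 1) + m ζ 0 0 * m ζ 1 1 = 1
      linear_combination hd
  -- witness for the pole of m' at p
  obtain ⟨g', hg'd, hg'z, _⟩ := hm'.2 p hpZ'
  have hsets : ((↑Z' : Set ℂ)ᶜ ∪ {p}) = (↑Z : Set ℂ)ᶜ := by
    rw [hZ'eq]
    ext z
    by_cases hzp : z = p <;> simp [hzp, Finset.coe_insert, hpZ]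
  have hg'dZ : EntryDiffOn g' (↑Z : Set ℂ)ᶜ := by rw [← hsets]; exact hg'd
  -- F = g' * madj , analytic off Z, extends analytically over Z
  set F : ℂ → Mat2 := fun ζ => g' ζ * madj ζ with hF
  have hFe : ∀ ζ i j, F ζ i j = g' ζ i 0 * madj ζ 0 j + g' ζ i 1 * madj ζ 1 j := by
    intro ζ i j
    simp [hF, Matrix.mul_apply, Fin.sum_univ_two]
  have hFd : ∀ i j, DifferentiableOn ℂ (fun ζ => F ζ i j) (↑Z : Set ℂ)ᶜ := by
    intro i j
    have : (fun ζ => F ζ i j) = fun ζ => g' ζ i 0 * madj ζ 0 j + g' ζ i 1 * madj ζ 1 j :=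
      funext fun ζ => hFe ζ i j
    rw [this]
    exact ((hg'dZ i 0).mul (hmadjd 0 j)).add ((hg'dZ i 1).mul (hmadjd 1 j))
  -- eventually facts
  have hZ'Zev : ∀ x : ℂ, ∀ᶠ ζ in 𝓝[≠] x, ζ ∉ (↑Z' : Set ℂ) := fun x => eventually_not_mem Z' x
  -- limits of F at points of Z
  have hFlim : ∀ i j : Fin 2, ∀ x ∈ Z, ∃ L, Tendsto (fun ζ => F ζ i j) (𝓝[≠] x) (𝓝 L) := by
    intro i j x hx
    obtain ⟨ω₀, hω₀, hwx⟩ := hwZ x hx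
    obtain ⟨h, hhd, hdec⟩ := pole_decomp Z w m hm hx hω₀ hwx
    obtain ⟨h', hh'd, hdec'⟩ := pole_decomp Z' w m' hm' (hZsub x hx) hω₀ hwx
    have hUx : ((↑Z : Set ℂ)ᶜ ∪ {x}) ∈ 𝓝 x := aux_mem_nhds Z x
    have hU'x : ((↑Z' : Set ℂ)ᶜ ∪ {x}) ∈ 𝓝 x := aux_mem_nhds Z' x
    have hdiff : ∀ i' j', DifferentiableAt ℂ (fun ζ => h ζ i' j') x :=
      fun i' j' => (hhd i' j').differentiableAt hUx
    have hdiff' : ∀ i' j', DifferentiableAt ℂ (fun ζ => h' ζ i' j') x :=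
      fun i' j' => (hh'd i' j').differentiableAt hU'x
    have hcont : ∀ i' j', ContinuousAt (fun ζ => h ζ i' j') x :=
      fun i' j' => (hdiff i' j').continuousAt
    have hcont' : ∀ i' j', ContinuousAt (fun ζ => h' ζ i' j') x :=
      fun i' j' => (hdiff' i' j').continuousAt
    have hevd : ∀ᶠ ζ in 𝓝[≠] x, ∀ i' j' : Fin 2,
        g' ζ i' j' = (ζ - p) * m' ζ i' j' := by
      filter_upwards [hZ'Zev x] with ζ hζ i' j'
      rw [hg'z ζ hζ]
      simp [Matrix.smul_apply, smul_eq_mul]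
    -- per-entry little computation
    fin_cases i <;> fin_cases j <;> simp only [Fin.zero_eta, Fin.mk_one]
    · -- (0,0)
      apply tendsto_helper
        (u := fun ζ => h' ζ 0 0 * (ω₀ * h x 1 0) - (ω₀ * h' x 0 0) * h ζ 1 0)
        (v := fun ζ => h' ζ 0 0 * h ζ 1 1 - h' ζ 0 1 * h ζ 1 0)
        (g := fun ζ => ζ - p)
      · exact ((hdiff' 0 0).mul_const _).sub ((hdiff 1 0).const_mul _)
      · ring
      · exact ((hcont' 0 0).mul (hcont 1 1)).sub ((hcont' 0 1).mul (hcont 1 0))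
      · exact (continuousAt_id.sub continuousAt_const)
      · filter_upwards [hZ'Zev x, hevd] with ζ hζ' hgm
        have hζ : ζ ∉ (↑Z : Set ℂ) := (hZZ' ζ hζ').1
        obtain ⟨e1, e2, e3, e4⟩ := decomp_entries hdec hζ
        obtain ⟨f1, f2, f3, f4⟩ := decomp_entries hdec' hζ'
        rw [hFe, (hmadj_e ζ).1, (hmadj_e ζ).2.2.1, hgm 0 0, hgm 0 1,
          e2, e4, f1, f3]
        ring
    · -- (0,1)
      apply tendsto_helper
        (u := fun ζ => (ω₀ * h' x 0 0) * h ζ 0 0 - (ω₀ * h x 0 0) * h' ζ 0 0)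
        (v := fun ζ => h' ζ 0 1 * h ζ 0 0 - h' ζ 0 0 * h ζ 0 1)
        (g := fun ζ => ζ - p)
      · exact ((hdiff 0 0).const_mul _).sub ((hdiff' 0 0).const_mul _)
      · ring
      · exact ((hcont' 0 1).mul (hcont 0 0)).sub ((hcont' 0 0).mul (hcont 0 1))
      · exact (continuousAt_id.sub continuousAt_const)
      · filter_upwards [hZ'Zev x, hevd] with ζ hζ' hgm
        have hζ : ζ ∉ (↑Z : Set ℂ) := (hZZ' ζ hζ').1
        obtain ⟨e1, e2, e3, e4⟩ := decomp_entries hdec hζ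
        obtain ⟨f1, f2, f3, f4⟩ := decomp_entries hdec' hζ'
        rw [hFe, (hmadj_e ζ).2.1, (hmadj_e ζ).2.2.2, hgm 0 0, hgm 0 1,
          e1, e3, f1, f3]
        ring
    · -- (1,0)
      apply tendsto_helper
        (u := fun ζ => h' ζ 1 0 * (ω₀ * h x 1 0) - (ω₀ * h' x 1 0) * h ζ 1 0)
        (v := fun ζ => h' ζ 1 0 * h ζ 1 1 - h' ζ 1 1 * h ζ 1 0)
        (g := fun ζ => ζ - p)
      · exact ((hdiff' 1 0).mul_const _).sub ((hdiff 1 0).const_mul _)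
      · ring
      · exact ((hcont' 1 0).mul (hcont 1 1)).sub ((hcont' 1 1).mul (hcont 1 0))
      · exact (continuousAt_id.sub continuousAt_const)
      · filter_upwards [hZ'Zev x, hevd] with ζ hζ' hgm
        have hζ : ζ ∉ (↑Z : Set ℂ) := (hZZ' ζ hζ').1
        obtain ⟨e1, e2, e3, e4⟩ := decomp_entries hdec hζ
        obtain ⟨f1, f2, f3, f4⟩ := decomp_entries hdec' hζ'
        rw [hFe, (hmadj_e ζ).1, (hmadj_e ζ).2.2.1, hgm 1 0, hgm 1 1,
          e2, e4, f2, f4]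
        ring
    · -- (1,1)
      apply tendsto_helper
        (u := fun ζ => (ω₀ * h' x 1 0) * h ζ 0 0 - (ω₀ * h x 0 0) * h' ζ 1 0)
        (v := fun ζ => h' ζ 1 1 * h ζ 0 0 - h' ζ 1 0 * h ζ 0 1)
        (g := fun ζ => ζ - p)
      · exact ((hdiff 0 0).const_mul _).sub ((hdiff' 1 0).const_mul _)
      · ring
      · exact ((hcont' 1 1).mul (hcont 0 0)).sub ((hcont' 1 0).mul (hcont 0 1))
      · exact (continuousAt_id.sub continuousAt_const)
      · filter_upwards [hZ'Zev x, hevd] with ζ hζ' hgm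
        have hζ : ζ ∉ (↑Z : Set ℂ) := (hZZ' ζ hζ').1
        obtain ⟨e1, e2, e3, e4⟩ := decomp_entries hdec hζ
        obtain ⟨f1, f2, f3, f4⟩ := decomp_entries hdec' hζ'
        rw [hFe, (hmadj_e ζ).2.1, (hmadj_e ζ).2.2.2, hgm 1 0, hgm 1 1,
          e1, e3, f2, f4]
        ring
  -- glue each entry of F to an entire function
  have hglue : ∀ i j : Fin 2, ∃ Eij : ℂ → ℂ, Differentiable ℂ Eij ∧
      ∀ z ∉ (↑Z : Set ℂ), Eij z = F z i j :=
    fun i j => glue_lemma Z (fun ζ => F ζ i j) (hFd i j) (hFlim i j)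
  choose E hE1 hE2 using hglue
  -- asymptotics of the entries of m' * madj
  have hq : ∀ i j, Tendsto (fun ζ => (m ζ * Matrix.diagonal ![ζ⁻¹ ^ k, ζ ^ k]) i j)
      (cobounded ℂ) (𝓝 ((1 : Mat2) i j)) := fun i j => matrix_tendsto_entry hma i j
  have hq' : ∀ i j, Tendsto (fun ζ => (m' ζ * Matrix.diagonal ![ζ⁻¹ ^ k, ζ ^ k]) i j)
      (cobounded ℂ) (𝓝 ((1 : Mat2) i j)) := fun i j => matrix_tendsto_entry hm'a i j
  have hqe : ∀ (n : ℂ → Mat2) (ζ : ℂ) (i j : Fin 2),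
      (n ζ * Matrix.diagonal ![ζ⁻¹ ^ k, ζ ^ k]) i j = n ζ i j * (![ζ⁻¹ ^ k, ζ ^ k] j) := by
    intro n ζ i j
    simp [Matrix.mul_diagonal]
  have hMMlim : ∀ i j : Fin 2, Tendsto (fun ζ => (m' ζ * madj ζ) i j)
      (cobounded ℂ) (𝓝 ((1 : Mat2) i j)) := by
    have hMMe : ∀ ζ i j, (m' ζ * madj ζ) i j = m' ζ i 0 * madj ζ 0 j + m' ζ i 1 * madj ζ 1 j := by
      intro ζ i j; simp [Matrix.mul_apply, Fin.sum_univ_two]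
    intro i j
    fin_cases i <;> fin_cases j <;> try simp only [Fin.zero_eta, Fin.mk_one]
    · -- (0,0) : m'00 m11 - m'01 m10 = q'00 q11 - q'01 q10 → 1
      have hlim := ((hq' 0 0).mul (hq 1 1)).sub ((hq' 0 1).mul (hq 1 0))
      refine Tendsto.congr' ?_ (by simpa [Matrix.one_apply] using hlim)
      filter_upwards [eventually_cobounded_ne 0] with ζ hζ
      have hinv : ζ⁻¹ ^ k * ζ ^ k = 1 := by rw [← mul_pow, inv_mul_cancel₀ hζ, one_pow]
      rw [hMMe, (hmadj_e ζ).1, (hmadj_e ζ).2.2.1]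
      try simp only [Matrix.mul_diagonal, Matrix.cons_val_zero, Matrix.cons_val_one,
        Matrix.head_cons]
      linear_combination (m' ζ 0 0 * m ζ 1 1 - m' ζ 0 1 * m ζ 1 0) * hinv
    · -- (0,1) : m'01 m00 - m'00 m01 = q'01 q00 - q'00 q01 → 0
      have hlim := ((hq' 0 1).mul (hq 0 0)).sub ((hq' 0 0).mul (hq 0 1))
      refine Tendsto.congr' ?_ (by simpa [Matrix.one_apply] using hlim)
      filter_upwards [eventually_cobounded_ne 0] with ζ hζ
      have hinv : ζ⁻¹ ^ k * ζ ^ k = 1 := by rw [← mul_pow, inv_mul_cancel₀ hζ, one_pow]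
      rw [hMMe, (hmadj_e ζ).2.1, (hmadj_e ζ).2.2.2]
      try simp only [Matrix.mul_diagonal, Matrix.cons_val_zero, Matrix.cons_val_one,
        Matrix.head_cons]
      linear_combination (m' ζ 0 1 * m ζ 0 0 - m' ζ 0 0 * m ζ 0 1) * hinv
    · -- (1,0)
      have hlim := ((hq' 1 0).mul (hq 1 1)).sub ((hq' 1 1).mul (hq 1 0))
      refine Tendsto.congr' ?_ (by simpa [Matrix.one_apply] using hlim)
      filter_upwards [eventually_cobounded_ne 0] with ζ hζ
      have hinv : ζ⁻¹ ^ k * ζ ^ k = 1 := by rw [← mul_pow, inv_mul_cancel₀ hζ, one_pow]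
      rw [hMMe, (hmadj_e ζ).1, (hmadj_e ζ).2.2.1]
      try simp only [Matrix.mul_diagonal, Matrix.cons_val_zero, Matrix.cons_val_one,
        Matrix.head_cons]
      linear_combination (m' ζ 1 0 * m ζ 1 1 - m' ζ 1 1 * m ζ 1 0) * hinv
    · -- (1,1)
      have hlim := ((hq' 1 1).mul (hq 0 0)).sub ((hq' 1 0).mul (hq 0 1))
      refine Tendsto.congr' ?_ (by simpa [Matrix.one_apply] using hlim)
      filter_upwards [eventually_cobounded_ne 0] with ζ hζ
      have hinv : ζ⁻¹ ^ k * ζ ^ k = 1 := by rw [← mul_pow, inv_mul_cancel₀ hζ, one_pow]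
      rw [hMMe, (hmadj_e ζ).2.1, (hmadj_e ζ).2.2.2]
      try simp only [Matrix.mul_diagonal, Matrix.cons_val_zero, Matrix.cons_val_one,
        Matrix.head_cons]
      linear_combination (m' ζ 1 1 * m ζ 0 0 - m' ζ 1 0 * m ζ 0 1) * hinv
  -- the matrix A
  set A : Mat2 := Matrix.of fun i j => E i j p with hA
  have hAe : ∀ i j, A i j = E i j p := fun i j => rfl
  -- for ζ ∉ Z' : E i j ζ = (ζ - p) * (m' ζ * madj ζ) i j
  have hEF : ∀ (i j : Fin 2) (ζ : ℂ), ζ ∉ (↑Z' : Set ℂ) →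
      E i j ζ = (ζ - p) * (m' ζ * madj ζ) i j := by
    intro i j ζ hζ'
    have hζ : ζ ∉ (↑Z : Set ℂ) := (hZZ' ζ hζ').1
    rw [hE2 i j ζ hζ, hFe]
    have hg : ∀ l, g' ζ i l = (ζ - p) * m' ζ i l := by
      intro l; rw [hg'z ζ hζ']; simp [Matrix.smul_apply, smul_eq_mul]
    have hMMe : (m' ζ * madj ζ) i j = m' ζ i 0 * madj ζ 0 j + m' ζ i 1 * madj ζ 1 j := by
      simp [Matrix.mul_apply, Fin.sum_univ_two]
    rw [hg 0, hg 1, hMMe]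
    ring
  -- Liouville for the dslope of E
  have hGone : ∀ i j : Fin 2, ∀ ζ, dslope (E i j) p ζ = (1 : Mat2) i j := by
    intro i j
    apply liouville_tendsto
    · rw [← differentiableOn_univ]
      exact (Complex.differentiableOn_dslope univ_mem).2 (hE1 i j).differentiableOn
    · have hto : Tendsto (fun ζ => (m' ζ * madj ζ) i j - (ζ - p)⁻¹ * A i j)
          (cobounded ℂ) (𝓝 ((1 : Mat2) i j)) := by
        have h0 : Tendsto (fun ζ : ℂ => (ζ - p)⁻¹ * A i j) (cobounded ℂ)
            (𝓝 (0 * A i j)) := (inv_shift_tendsto p).mul tendsto_const_nhds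
        have := (hMMlim i j).sub h0
        simpa using this
      refine Tendsto.congr' ?_ hto
      filter_upwards [eventually_cobounded_not_mem Z'] with ζ hζ'
      have hζp : ζ ≠ p := (hZZ' ζ hζ').2
      rw [dslope_of_ne _ hζp, slope_def_field, hEF i j ζ hζ', hAe]
      field_simp [sub_ne_zero.2 hζp]
      try ring
  -- main relation
  have hrel : ∀ ζ : ℂ, ζ ∉ (↑Z' : Set ℂ) → m' ζ * madj ζ = 1 + (ζ - p)⁻¹ • A := by
    intro ζ hζ'
    have hζp : ζ ≠ p := (hZZ' ζ hζ').2
    have hne : ζ - p ≠ 0 := sub_ne_zero.2 hζp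
    ext i j
    have h1 := hGone i j ζ
    rw [dslope_of_ne _ hζp, slope_def_field, hEF i j ζ hζ', div_eq_iff hne] at h1
    rw [Matrix.add_apply, Matrix.smul_apply, smul_eq_mul, hAe]
    field_simp
    linear_combination h1
  have hfinal : ∀ ζ : ℂ, ζ ∉ (↑Z' : Set ℂ) → m' ζ = (1 + (ζ - p)⁻¹ • A) * m ζ := by
    intro ζ hζ'
    have hζ : ζ ∉ (↑Z : Set ℂ) := (hZZ' ζ hζ').1
    calc m' ζ = m' ζ * (madj ζ * m ζ) := by rw [hmadj_mul ζ hζ, mul_one]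
    _ = (m' ζ * madj ζ) * m ζ := by rw [mul_assoc]
    _ = (1 + (ζ - p)⁻¹ • A) * m ζ := by rw [hrel ζ hζ']
  -- nilpotency of A
  have hdetid : ∀ ζ : ℂ, ζ ∉ (↑Z' : Set ℂ) →
      (ζ - p)⁻¹ * (A 0 0 + A 1 1) + (ζ - p)⁻¹ * (ζ - p)⁻¹ * (A 0 0 * A 1 1 - A 0 1 * A 1 0) = 0 := by
    intro ζ hζ'
    have hζ : ζ ∉ (↑Z : Set ℂ) := (hZZ' ζ hζ').1
    have hd := hdet ζ hζ
    have hd' := hdet' ζ hζ'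
    have hrw := hfinal ζ hζ'
    set c : ℂ := (ζ - p)⁻¹ with hc
    set B : Mat2 := 1 + c • A with hB
    have hBe : B 0 0 = 1 + c * A 0 0 ∧ B 0 1 = c * A 0 1 ∧ B 1 0 = c * A 1 0 ∧
        B 1 1 = 1 + c * A 1 1 := by
      refine ⟨?_, ?_, ?_, ?_⟩ <;>
        simp [hB, Matrix.add_apply, Matrix.smul_apply, Matrix.one_apply, smul_eq_mul]
    have hme : ∀ i j : Fin 2, m' ζ i j = B i 0 * m ζ 0 j + B i 1 * m ζ 1 j := by
      intro i j; rw [hrw]; simp [Matrix.mul_apply, Fin.sum_univ_two]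
    rw [hme 0 0, hme 1 1, hme 0 1, hme 1 0] at hd'
    obtain ⟨b1, b2, b3, b4⟩ := hBe
    rw [b1, b2, b3, b4] at hd'
    linear_combination hd' - (1 + c * (A 0 0 + A 1 1) + c * c * (A 0 0 * A 1 1 - A 0 1 * A 1 0)) * hd
  -- extract trace and determinant zero from two sample points
  obtain ⟨ζ₁, hζ₁⟩ := Infinite.exists_notMem_finset Z'
  obtain ⟨ζ₂, hζ₂⟩ := Infinite.exists_notMem_finset (insert ζ₁ Z')
  have hζ₂Z : ζ₂ ∉ Z' := fun h => hζ₂ (Finset.mem_insert_of_mem h)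
  have hζ₁₂ : ζ₁ ≠ ζ₂ := fun h => hζ₂ (h ▸ Finset.mem_insert_self _ _)
  have hc1ne : (ζ₁ - p)⁻¹ ≠ 0 := inv_ne_zero (sub_ne_zero.2 (hZZ' ζ₁ (by simpa using hζ₁)).2)
  have hc2ne : (ζ₂ - p)⁻¹ ≠ 0 := inv_ne_zero (sub_ne_zero.2 (hZZ' ζ₂ (by simpa using hζ₂Z)).2)
  have hc12 : (ζ₁ - p)⁻¹ ≠ (ζ₂ - p)⁻¹ := by
    intro hcc
    apply hζ₁₂
    have h5 := inv_injective hcc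
    linear_combination h5
  have h1 := hdetid ζ₁ (by simpa using hζ₁)
  have h2 := hdetid ζ₂ (by simpa using hζ₂Z)
  have e1 : (A 0 0 + A 1 1) + (ζ₁ - p)⁻¹ * (A 0 0 * A 1 1 - A 0 1 * A 1 0) = 0 := by
    apply mul_left_cancel₀ hc1ne
    rw [mul_zero]
    linear_combination h1
  have e2 : (A 0 0 + A 1 1) + (ζ₂ - p)⁻¹ * (A 0 0 * A 1 1 - A 0 1 * A 1 0) = 0 := by
    apply mul_left_cancel₀ hc2ne
    rw [mul_zero]
    linear_combination h2
  have hd0 : A 0 0 * A 1 1 - A 0 1 * A 1 0 = 0 := by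
    have h3 : ((ζ₁ - p)⁻¹ - (ζ₂ - p)⁻¹) * (A 0 0 * A 1 1 - A 0 1 * A 1 0) = 0 := by
      linear_combination e1 - e2
    rcases mul_eq_zero.1 h3 with h4 | h4
    · exact absurd (sub_eq_zero.1 h4) hc12
    · exact h4
  have ht0 : A 0 0 + A 1 1 = 0 := by linear_combination e1 - (ζ₁ - p)⁻¹ * hd0
  refine ⟨A, ?_, fun ζ hζ' => hfinal ζ hζ'⟩
  ext i j
  fin_cases i <;> fin_cases j <;>
    · simp only [Matrix.mul_apply, Fin.sum_univ_two, Matrix.zero_apply, Fin.isValue,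
        Fin.zero_eta, Fin.mk_one]
      first
      | linear_combination A 0 0 * ht0 - hd0
      | linear_combination A 0 1 * ht0
      | linear_combination A 1 0 * ht0
      | linear_combination A 1 1 * ht0 - hd0
end
end

section
/- In the Lax-pair setup with 1 ≤ k ≤ s ≤ N, suppose in addition that d_1 and d_2 are polynomials of degree at most n, with λ_1 and λ_2 the coefficients of ζ^n in d_1 and d_2 respectively. Let m, m′ be the solutions of the discrete Riemann–Hilbert problems on {π_0,…,π_{s−1}} and on {π_0,…,π_s} with jump matrices w(π_x) = [[0, ω(x)],[0,0]] and asymptotics m(ζ)·diag(ζ^{−k},ζ^{k}) → I, m′(ζ)·diag(ζ^{−k},ζ^{k}) → I as ζ → ∞, and let M be the entire extension of ζ ↦ m(σζ)·D(ζ)·m′(ζ)^{−1}, D(ζ) = diag(d_1(ζ), d_2(ζ)). Then M is a matrix polynomial in ζ of degree at most n, i.e. M(ζ) = Σ_{i=0}^{n} M^{(i)} ζ^i for constant matrices M^{(i)}, and its coefficient of ζ^n is M^{(n)} = diag(η^{k}λ_1, η^{−k}λ_2). -/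
open Filter Topology Matrix Polynomial Bornology

noncomputable section

lemma ev_ne (a : ℂ) : ∀ᶠ ζ : ℂ in cobounded ℂ, ζ ≠ a :=
  (Bornology.le_cofinite ℂ) (Filter.eventually_cofinite_ne a)

lemma poly_tendsto (p : Polynomial ℂ) (n : ℕ) (h : p.degree ≤ (n : ℕ)) :
    Tendsto (fun ζ : ℂ => ζ⁻¹ ^ n * p.eval ζ) (cobounded ℂ) (𝓝 (p.coeff n)) := by
  have hnat : p.natDegree < n + 1 :=
    Nat.lt_succ_of_le (Polynomial.natDegree_le_iff_degree_le.2 h)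
  have key : ∀ ζ : ℂ, ζ ≠ 0 →
      ζ⁻¹ ^ n * p.eval ζ = ∑ i ∈ Finset.range (n + 1), p.coeff i * ζ⁻¹ ^ (n - i) := by
    intro ζ hζ
    rw [Polynomial.eval_eq_sum_range' hnat, Finset.mul_sum]
    refine Finset.sum_congr rfl fun i hi => ?_
    have hi' : i ≤ n := Nat.lt_succ_iff.mp (Finset.mem_range.mp hi)
    have : ζ⁻¹ ^ n = ζ⁻¹ ^ (n - i) * ζ⁻¹ ^ i := by
      rw [← pow_add, Nat.sub_add_cancel hi']
    rw [this]
    field_simp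
    ring_nf
    rw [← mul_pow, mul_inv_cancel₀ hζ, one_pow, one_mul]
  have hlim : Tendsto (fun ζ : ℂ => ∑ i ∈ Finset.range (n + 1), p.coeff i * ζ⁻¹ ^ (n - i))
      (cobounded ℂ) (𝓝 (∑ i ∈ Finset.range (n + 1), p.coeff i * (0 : ℂ) ^ (n - i))) := by
    refine tendsto_finset_sum _ fun i _ => ?_
    exact (tendsto_inv₀_cobounded.pow (n - i)).const_mul _
  have hsum : (∑ i ∈ Finset.range (n + 1), p.coeff i * (0 : ℂ) ^ (n - i)) = p.coeff n := by
    rw [Finset.sum_eq_single n]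
    · simp
    · intro i hi hne
      have hi' : i < n := lt_of_le_of_ne (Nat.lt_succ_iff.mp (Finset.mem_range.mp hi)) hne
      rw [zero_pow (Nat.sub_ne_zero_of_lt hi'), mul_zero]
    · intro h'; exact absurd (Finset.self_mem_range_succ n) h'
  rw [hsum] at hlim
  exact hlim.congr' ((ev_ne 0).mono fun ζ hζ => (key ζ hζ).symm)

lemma entire_poly : ∀ (n : ℕ) (f : ℂ → ℂ), Differentiable ℂ f → ∀ c : ℂ,
    Tendsto (fun ζ : ℂ => ζ⁻¹ ^ n * f ζ) (cobounded ℂ) (𝓝 c) →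
    ∃ a : ℕ → ℂ, (∀ ζ, f ζ = ∑ i ∈ Finset.range (n + 1), a i * ζ ^ i) ∧ a n = c := by
  intro n
  induction n with
  | zero =>
    intro f hf c hc
    have hc' : Tendsto f (cocompact ℂ) (𝓝 c) := by
      rw [← Metric.cobounded_eq_cocompact]
      exact hc.congr (by simp)
    have := hf.eq_const_of_tendsto_cocompact hc'
    exact ⟨fun _ => c, fun ζ => by simpa using congrFun this ζ, rfl⟩
  | succ n ih =>
    intro f hf c hc
    set g : ℂ → ℂ := dslope f 0 with hg
    have hgdiff : Differentiable ℂ g := by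
      rw [← differentiableOn_univ]
      exact (Complex.differentiableOn_dslope (by simp)).2 hf.differentiableOn
    have hfg : ∀ ζ : ℂ, f ζ = f 0 + ζ * g ζ := by
      intro ζ
      rcases eq_or_ne ζ 0 with rfl | hζ
      · simp
      · rw [hg, dslope_of_ne f hζ, slope_def_field]
        field_simp
        ring
    have hgt : Tendsto (fun ζ : ℂ => ζ⁻¹ ^ n * g ζ) (cobounded ℂ) (𝓝 c) := by
      have h1 : Tendsto (fun ζ : ℂ => ζ⁻¹ ^ (n + 1) * f ζ - ζ⁻¹ ^ (n + 1) * f 0)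
          (cobounded ℂ) (𝓝 (c - 0)) := by
        refine hc.sub ?_
        have := (tendsto_inv₀_cobounded.pow (n + 1)).mul_const (f 0)
        simpa using this
      rw [sub_zero] at h1
      refine h1.congr' ((ev_ne 0).mono fun ζ hζ => ?_)
      have : f ζ = f 0 + ζ * g ζ := hfg ζ
      rw [this]
      field_simp
      ring_nf
      rw [mul_inv_cancel₀ hζ, one_mul]
    obtain ⟨a, ha, han⟩ := ih g hgdiff c hgt
    refine ⟨fun i => if i = 0 then f 0 else a (i - 1), fun ζ => ?_, by simp [han]⟩
    rw [hfg ζ, Finset.sum_range_succ']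
    simp only [if_pos rfl, Nat.add_sub_cancel, pow_zero, mul_one]
    rw [ha ζ, Finset.mul_sum, add_comm]
    congr 1
    refine Finset.sum_congr rfl fun i _ => ?_
    simp only [Nat.succ_ne_zero, if_false]
    ring

/-- if `d₁, d₂` are polynomials of degree at most `n`, the entire extension `M`
of `m(σζ) D(ζ) m′(ζ)⁻¹` is a matrix polynomial of degree at most `n` whose coefficient of
`ζ^n` is `diag(η^k λ₁, η^{-k} λ₂)`. -/
theorem stmt4 (N k s : ℕ) (hk1 : 1 ≤ k) (hks : k ≤ s) (hsN : s ≤ N)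
    (π ω : ℕ → ℝ)
    (hπ : ∀ i ≤ N, ∀ j ≤ N, π i = π j → i = j)
    (hω : ∀ x ≤ N, 0 < ω x)
    (η c₀ : ℂ) (hη : η ≠ 0)
    (σ : ℂ → ℂ) (hσ : ∀ ζ, σ ζ = η * ζ + c₀)
    (hσπ : ∀ x < N, σ (π (x + 1) : ℂ) = (π x : ℂ))
    (d₁ d₂ : ℂ → ℂ)
    (n : ℕ) (p₁ p₂ : Polynomial ℂ)
    (hd₁p : ∀ ζ, d₁ ζ = p₁.eval ζ) (hd₂p : ∀ ζ, d₂ ζ = p₂.eval ζ)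
    (hdeg₁ : p₁.degree ≤ (n : ℕ)) (hdeg₂ : p₂.degree ≤ (n : ℕ))
    (hd₁0 : d₁ (π 0 : ℂ) = 0)
    (hd : ∀ x, 1 ≤ x → x ≤ N → d₂ (π x : ℂ) ≠ 0 ∧
      (ω (x - 1) : ℂ) / (ω x : ℂ) = η * d₁ (π x : ℂ) / d₂ (π x : ℂ))
    (w : ℂ → Mat2) (hw : ∀ x ≤ N, w (π x : ℂ) = !![0, (ω x : ℂ); 0, 0])
    (m m' : ℂ → Mat2)
    (hm : SolvesDRHP (Zset π s) w m) (hma : AsympId k m)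
    (hm' : SolvesDRHP (Zset π (s + 1)) w m') (hm'a : AsympId k m')
    (M : ℂ → Mat2) (hMdiff : ∀ i j, Differentiable ℂ fun ζ => M ζ i j)
    (hMeq : ∀ ζ : ℂ, ζ ∉ (Zset π (s + 1) : Set ℂ) →
      M ζ = m (σ ζ) * Matrix.diagonal ![d₁ ζ, d₂ ζ] * (m' ζ)⁻¹) :
    ∃ Mc : ℕ → Mat2,
      (∀ ζ : ℂ, M ζ = ∑ i ∈ Finset.range (n + 1), ζ ^ i • Mc i) ∧
      Mc n = Matrix.diagonal ![η ^ k * p₁.coeff n, η⁻¹ ^ k * p₂.coeff n] := by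
  have hma' : Filter.Tendsto (fun ζ : ℂ => m ζ * Matrix.diagonal ![ζ⁻¹ ^ k, ζ ^ k])
      (Bornology.cobounded ℂ) (𝓝 1) := hma
  have hm'a' : Filter.Tendsto (fun ζ : ℂ => m' ζ * Matrix.diagonal ![ζ⁻¹ ^ k, ζ ^ k])
      (Bornology.cobounded ℂ) (𝓝 1) := hm'a

  set A : Mat2 := Matrix.diagonal ![η ^ k * p₁.coeff n, η⁻¹ ^ k * p₂.coeff n] with hA
  -- σ tends to infinity
  have hσten : Tendsto σ (cobounded ℂ) (cobounded ℂ) := by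
    rw [← tendsto_norm_atTop_iff_cobounded]
    have hlow : Tendsto (fun ζ : ℂ => ‖η‖ * ‖ζ‖ + -‖c₀‖) (cobounded ℂ) atTop :=
      tendsto_atTop_add_const_right _ _
        (tendsto_norm_cobounded_atTop.const_mul_atTop (norm_pos_iff.2 hη))
    refine tendsto_atTop_mono (fun ζ => ?_) hlow
    rw [hσ ζ]
    have h1 : ‖η * ζ‖ ≤ ‖η * ζ + c₀‖ + ‖c₀‖ := by
      calc ‖η * ζ‖ = ‖η * ζ + c₀ + -c₀‖ := by ring_nf
      _ ≤ ‖η * ζ + c₀‖ + ‖-c₀‖ := norm_add_le _ _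
      _ = ‖η * ζ + c₀‖ + ‖c₀‖ := by rw [norm_neg]
    rw [norm_mul] at h1
    linarith
  -- eventual facts
  have evσ : ∀ᶠ ζ : ℂ in cobounded ℂ, σ ζ ≠ 0 := by
    refine (ev_ne (-(c₀ / η))).mono fun ζ h h0 => h ?_
    rw [hσ ζ] at h0
    field_simp
    linear_combination h0
  have evZ : ∀ᶠ ζ : ℂ in cobounded ℂ, ζ ∉ (Zset π (s + 1) : Set ℂ) := by
    have hfin : ((Zset π (s + 1) : Finset ℂ) : Set ℂ).Finite := (Zset π (s + 1)).finite_toSet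
    exact (Bornology.le_cofinite ℂ) hfin.compl_mem_cofinite
  have evE : ∀ᶠ ζ : ℂ in cobounded ℂ,
      ζ ≠ 0 ∧ σ ζ ≠ 0 ∧ ζ ∉ (Zset π (s + 1) : Set ℂ) :=
    (ev_ne 0).and (evσ.and evZ)
  -- the three factors
  have hA₁ : Tendsto (fun ζ : ℂ => m (σ ζ) * Matrix.diagonal ![(σ ζ)⁻¹ ^ k, (σ ζ) ^ k])
      (cobounded ℂ) (𝓝 1) := hma'.comp hσten
  have hGinv : Tendsto (fun ζ : ℂ => (m' ζ * Matrix.diagonal ![ζ⁻¹ ^ k, ζ ^ k])⁻¹)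
      (cobounded ℂ) (𝓝 1) := by
    have h : ContinuousAt Ring.inverse ((1 : Mat2).det) := by
      rw [Matrix.det_one, Ring.inverse_eq_inv']
      exact continuousAt_inv₀ one_ne_zero
    have hc := continuousAt_matrix_inv (1 : Mat2) h
    have h1 : (1 : Mat2)⁻¹ = 1 := by
      rw [Matrix.inv_def, Matrix.det_one, Matrix.adjugate_one]; simp
    have := hc.tendsto.comp hm'a'
    rw [h1] at this
    exact this
  -- the middle diagonal factor
  set v : ℂ → Fin 2 → ℂ := fun ζ =>
    ![(σ ζ) ^ k * ζ⁻¹ ^ k * (ζ⁻¹ ^ n * d₁ ζ), (σ ζ)⁻¹ ^ k * ζ ^ k * (ζ⁻¹ ^ n * d₂ ζ)] with hv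
  have hbase : Tendsto (fun ζ : ℂ => η + c₀ * ζ⁻¹) (cobounded ℂ) (𝓝 η) := by
    have := tendsto_const_nhds (α := ℂ) (x := η) |>.add (tendsto_inv₀_cobounded.const_mul c₀)
    simpa using this
  have hp₁ : Tendsto (fun ζ : ℂ => ζ⁻¹ ^ n * d₁ ζ) (cobounded ℂ) (𝓝 (p₁.coeff n)) := by
    have := poly_tendsto p₁ n hdeg₁
    exact this.congr fun ζ => by rw [hd₁p ζ]
  have hp₂ : Tendsto (fun ζ : ℂ => ζ⁻¹ ^ n * d₂ ζ) (cobounded ℂ) (𝓝 (p₂.coeff n)) := by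
    have := poly_tendsto p₂ n hdeg₂
    exact this.congr fun ζ => by rw [hd₂p ζ]
  have hv0 : Tendsto (fun ζ : ℂ => (σ ζ) ^ k * ζ⁻¹ ^ k * (ζ⁻¹ ^ n * d₁ ζ)) (cobounded ℂ)
      (𝓝 (η ^ k * p₁.coeff n)) := by
    refine Tendsto.mul ?_ hp₁
    have h1 : Tendsto (fun ζ : ℂ => (η + c₀ * ζ⁻¹) ^ k) (cobounded ℂ) (𝓝 (η ^ k)) :=
      hbase.pow k
    refine h1.congr' ((ev_ne 0).mono fun ζ hζ => ?_)
    show (η + c₀ * ζ⁻¹) ^ k = (σ ζ) ^ k * ζ⁻¹ ^ k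
    rw [← mul_pow]
    congr 1
    rw [hσ ζ]
    field_simp
  have hv1 : Tendsto (fun ζ : ℂ => (σ ζ)⁻¹ ^ k * ζ ^ k * (ζ⁻¹ ^ n * d₂ ζ)) (cobounded ℂ)
      (𝓝 (η⁻¹ ^ k * p₂.coeff n)) := by
    refine Tendsto.mul ?_ hp₂
    have h1 : Tendsto (fun ζ : ℂ => ((η + c₀ * ζ⁻¹)⁻¹) ^ k) (cobounded ℂ) (𝓝 (η⁻¹ ^ k)) :=
      (hbase.inv₀ hη).pow k
    refine h1.congr' (((ev_ne 0).and evσ).mono fun ζ hζ => ?_)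
    obtain ⟨hζ0, hσ0⟩ := hζ
    show ((η + c₀ * ζ⁻¹)⁻¹) ^ k = (σ ζ)⁻¹ ^ k * ζ ^ k
    rw [← mul_pow]
    congr 1
    rw [hσ ζ] at hσ0 ⊢
    field_simp
  have hDmid : Tendsto (fun ζ : ℂ => Matrix.diagonal (v ζ)) (cobounded ℂ) (𝓝 A) := by
    have hcont : Continuous fun w : Fin 2 → ℂ => Matrix.diagonal w :=
      Continuous.matrix_diagonal continuous_id
    have hvten : Tendsto v (cobounded ℂ) (𝓝 ![η ^ k * p₁.coeff n, η⁻¹ ^ k * p₂.coeff n]) := by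
      rw [tendsto_pi_nhds]
      intro i
      fin_cases i
      · simpa [hv] using hv0
      · simpa [hv] using hv1
    exact (hcont.continuousAt.tendsto.comp hvten :)
  -- eventual equality
  have hkey : ∀ᶠ ζ : ℂ in cobounded ℂ,
      (m (σ ζ) * Matrix.diagonal ![(σ ζ)⁻¹ ^ k, (σ ζ) ^ k]) * Matrix.diagonal (v ζ) *
        (m' ζ * Matrix.diagonal ![ζ⁻¹ ^ k, ζ ^ k])⁻¹ = ζ⁻¹ ^ n • M ζ := by
    refine evE.mono fun ζ hζ => ?_
    obtain ⟨hζ0, hσ0, hZ⟩ := hζ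
    rw [hMeq ζ hZ, Matrix.mul_inv_rev]
    have hpz : ζ ^ k ≠ 0 := pow_ne_zero k hζ0
    have hinvdiag : (Matrix.diagonal ![ζ⁻¹ ^ k, ζ ^ k] : Mat2)⁻¹ =
        Matrix.diagonal ![ζ ^ k, ζ⁻¹ ^ k] := by
      apply Matrix.inv_eq_right_inv
      ext i j
      rw [Matrix.diagonal_mul_diagonal]
      rcases eq_or_ne i j with rfl | hij
      · rw [Matrix.diagonal_apply_eq, Matrix.one_apply_eq]
        fin_cases i <;>
          simp [inv_mul_cancel₀ hpz, mul_inv_cancel₀ hpz]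
      · rw [Matrix.diagonal_apply_ne _ hij, Matrix.one_apply_ne hij]
    rw [hinvdiag]
    have hdiag : Matrix.diagonal ![(σ ζ)⁻¹ ^ k, (σ ζ) ^ k] * Matrix.diagonal (v ζ) *
        Matrix.diagonal ![ζ ^ k, ζ⁻¹ ^ k] =
        ζ⁻¹ ^ n • Matrix.diagonal ![d₁ ζ, d₂ ζ] := by
      rw [Matrix.diagonal_mul_diagonal, Matrix.diagonal_mul_diagonal, ← Matrix.diagonal_smul]
      ext i j
      rcases eq_or_ne i j with rfl | hij
      · rw [Matrix.diagonal_apply_eq, Matrix.diagonal_apply_eq]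
        fin_cases i <;>
        · simp only [hv, Pi.mul_apply, Pi.smul_apply, smul_eq_mul, Matrix.cons_val_zero,
            Matrix.cons_val_one, Matrix.head_cons, Fin.mk_zero, Fin.mk_one, Fin.isValue]
          field_simp
          ring_nf
          simp [hσ0, hζ0, mul_right_comm _ (d₁ ζ), mul_right_comm _ (d₂ ζ)]
      · rw [Matrix.diagonal_apply_ne _ hij, Matrix.diagonal_apply_ne _ hij]
    calc m (σ ζ) * Matrix.diagonal ![(σ ζ)⁻¹ ^ k, (σ ζ) ^ k] * Matrix.diagonal (v ζ) *
          (Matrix.diagonal ![ζ ^ k, ζ⁻¹ ^ k] * (m' ζ)⁻¹)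
        = m (σ ζ) * (Matrix.diagonal ![(σ ζ)⁻¹ ^ k, (σ ζ) ^ k] * Matrix.diagonal (v ζ) *
          Matrix.diagonal ![ζ ^ k, ζ⁻¹ ^ k]) * (m' ζ)⁻¹ := by
          simp only [Matrix.mul_assoc]
      _ = m (σ ζ) * (ζ⁻¹ ^ n • Matrix.diagonal ![d₁ ζ, d₂ ζ]) * (m' ζ)⁻¹ := by rw [hdiag]
      _ = ζ⁻¹ ^ n • (m (σ ζ) * Matrix.diagonal ![d₁ ζ, d₂ ζ] * (m' ζ)⁻¹) := by
          rw [mul_smul_comm, smul_mul_assoc]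
  -- the limit of the rescaled M
  have hMten : Tendsto (fun ζ : ℂ => ζ⁻¹ ^ n • M ζ) (cobounded ℂ) (𝓝 A) := by
    have := (hA₁.mul hDmid).mul hGinv
    rw [one_mul, mul_one] at this
    exact this.congr' hkey
  -- entrywise limits and Liouville
  have hEij : ∀ i j, Tendsto (fun ζ : ℂ => ζ⁻¹ ^ n * M ζ i j) (cobounded ℂ) (𝓝 (A i j)) := by
    intro i j
    have hcont : Continuous fun X : Mat2 => X i j :=
      (continuous_apply j).comp (continuous_apply i)
    have := hcont.continuousAt.tendsto.comp hMten
    simpa [Function.comp_def, Matrix.smul_apply, smul_eq_mul] using this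
  have hexists : ∀ i j, ∃ a : ℕ → ℂ,
      (∀ ζ, M ζ i j = ∑ t ∈ Finset.range (n + 1), a t * ζ ^ t) ∧ a n = A i j :=
    fun i j => entire_poly n _ (hMdiff i j) _ (hEij i j)
  choose a ha han using hexists
  refine ⟨fun t => Matrix.of fun i j => a i j t, fun ζ => ?_, ?_⟩
  · ext i j
    rw [ha i j ζ]
    rw [Matrix.sum_apply]
    refine Finset.sum_congr rfl fun t _ => ?_
    simp [Matrix.smul_apply, smul_eq_mul, mul_comm]
  · ext i j
    show a i j n = A i j
    exact han i j
end
end
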